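/- arXiv:2001.05258 — 5 statements merged into one kernel-verified Lean document; each statement's English description precedes it below -/
import Mathlib

section
/- Let G be a graph and F a 2-factor of G (a spanning subgraph with every vertex of degree exactly 2). If ψ(G) is the effective girth of G (the largest integer ψ such that ψ·c_ψ(G) ≤ n, where c_ψ(G) counts vertices lying on a cycle of length at most ψ), then the number of connected components of F is at most 2n/ψ(G). -/
open Finset
open scoped Classical

/-- Degree of a vertex in an edge set. -/
noncomputable def edgeDeg {V : Type*} (F : Finset (Sym2 V)) (v : V) : ℕ :=
  (F.filter (fun e => v ∈ e)).card

/-- `cyclesUpTo G k` = number of vertices lying on a cycle of length at most `k`. -/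
noncomputable def cyclesUpTo {V : Type*} [Fintype V] (G : SimpleGraph V) (k : ℕ) : ℕ :=
  (Finset.univ.filter (fun v : V => ∃ w : G.Walk v v, w.IsCycle ∧ w.length ≤ k)).card

/-- In a finite graph where every vertex has exactly two neighbors, every vertex `v`
has, in its connected component, some vertex lying on a cycle whose support stays in the
component of `v`. -/
lemma exists_cycle_in_component {V : Type*} [Fintype V] (H : SimpleGraph V)
    (hdeg : ∀ x : V, ∃ a b : V, a ≠ b ∧ H.Adj x a ∧ H.Adj x b ∧
      (∀ c : V, H.Adj x c → c = a ∨ c = b)) (v : V) :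
    ∃ (y : V) (c : H.Walk y y), c.IsCycle ∧ ∀ z ∈ c.support, H.Reachable z v := by
  classical
  -- consider lengths of paths ending at v
  set P : Set ℕ := {L : ℕ | ∃ (x : V) (p : H.Walk x v), p.IsPath ∧ p.length = L} with hP
  have hne : P.Nonempty := ⟨0, v, SimpleGraph.Walk.nil, SimpleGraph.Walk.IsPath.nil, rfl⟩
  have hbdd : BddAbove P := by
    refine ⟨Fintype.card V, ?_⟩
    rintro L ⟨x, p, hp, rfl⟩
    exact hp.length_lt.le
  have hmem : sSup P ∈ P := Nat.sSup_mem hne hbdd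
  obtain ⟨x, p, hp, hlen⟩ := hmem
  -- p is not nil since there is a path of length 1 ending at v
  have hone : (1 : ℕ) ∈ P := by
    obtain ⟨a, b, hab, hva, _, _⟩ := hdeg v
    exact ⟨a, SimpleGraph.Walk.cons hva.symm SimpleGraph.Walk.nil,
      by simp [SimpleGraph.Walk.cons_isPath_iff, hva.ne'], rfl⟩
  have hnnil : ¬ p.Nil := by
    rw [SimpleGraph.Walk.not_nil_iff_lt_length, hlen]
    exact lt_of_lt_of_le Nat.zero_lt_one (le_csSup hbdd hone)
  obtain ⟨u, hxu, q, rfl⟩ := SimpleGraph.Walk.not_nil_iff.mp hnnil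
  rw [SimpleGraph.Walk.cons_isPath_iff] at hp
  -- x has a neighbor y ≠ u
  obtain ⟨a, b, hab, hxa, hxb, hall⟩ := hdeg x
  obtain ⟨y, hxy, hyu⟩ : ∃ y : V, H.Adj x y ∧ y ≠ u := by
    rcases hall u hxu with h | h
    · exact ⟨b, hxb, by rw [h]; exact fun hc => hab hc.symm⟩
    · exact ⟨a, hxa, by rw [h]; exact hab⟩
  -- by maximality, y lies on p
  have hy : y ∈ (SimpleGraph.Walk.cons hxu q).support := by
    by_contra hnot
    have hpath : (SimpleGraph.Walk.cons hxy.symm (SimpleGraph.Walk.cons hxu q)).IsPath := by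
      rw [SimpleGraph.Walk.cons_isPath_iff]
      exact ⟨by rw [SimpleGraph.Walk.cons_isPath_iff]; exact hp, hnot⟩
    have : (SimpleGraph.Walk.cons hxy.symm (SimpleGraph.Walk.cons hxu q)).length ∈ P :=
      ⟨y, _, hpath, rfl⟩
    have hle := le_csSup hbdd this
    simp only [SimpleGraph.Walk.length_cons] at hle hlen
    omega
  -- build a cycle
  set p : H.Walk x v := SimpleGraph.Walk.cons hxu q with hpdef
  have hppath : p.IsPath := by rw [SimpleGraph.Walk.cons_isPath_iff]; exact hp
  set q' : H.Walk x y := p.takeUntil y hy with hq'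
  have hq'path : q'.IsPath := hppath.takeUntil hy
  have hedge : s(y, x) ∉ q'.edges := by
    intro hmem
    have hmem' : s(y, x) ∈ p.edges := SimpleGraph.Walk.edges_takeUntil_subset p hy hmem
    rw [hpdef, SimpleGraph.Walk.edges_cons, List.mem_cons] at hmem'
    rcases hmem' with h | h
    · rw [Sym2.eq_iff] at h
      rcases h with ⟨h1, _⟩ | ⟨h1, _⟩
      · exact hxy.ne' h1
      · exact hyu h1
    · exact hp.2 (q.snd_mem_support_of_mem_edges h)
  have hcyc : (SimpleGraph.Walk.cons hxy.symm q').IsCycle :=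
    (SimpleGraph.Walk.cons_isCycle_iff q' hxy.symm).mpr ⟨hq'path, hedge⟩
  refine ⟨y, SimpleGraph.Walk.cons hxy.symm q', hcyc, ?_⟩
  intro z hz
  rw [SimpleGraph.Walk.support_cons, List.mem_cons] at hz
  have hz' : z ∈ p.support := by
    rcases hz with rfl | hz
    · exact hy
    · exact SimpleGraph.Walk.support_takeUntil_subset p hy hz
  exact (p.dropUntil z hz').reachable

theorem stmt0 {V : Type*} [Fintype V] [DecidableEq V] (G : SimpleGraph V)
    (F : Finset (Sym2 V)) (hFsub : F ⊆ G.edgeFinset)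
    (hFdeg : ∀ v : V, edgeDeg F v = 2)
    (ψ : ℕ)
    (hψ : IsGreatest {p : ℕ | p * cyclesUpTo G p ≤ Fintype.card V} ψ) :
    (Nat.card (SimpleGraph.fromEdgeSet (↑F : Set (Sym2 V))).ConnectedComponent : ℝ) ≤
      2 * Fintype.card V / ψ := by
  classical
  set n := Fintype.card V with hn
  set H := SimpleGraph.fromEdgeSet (↑F : Set (Sym2 V)) with hH
  -- ψ ≥ 1
  have hc1 : cyclesUpTo G 1 = 0 := by
    rw [cyclesUpTo, Finset.card_eq_zero, Finset.filter_eq_empty_iff]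
    rintro v - ⟨w, hw, hwl⟩
    have := hw.three_le_length
    omega
  have hψ1 : 1 ≤ ψ := hψ.2 (by simp [hc1])
  -- exactly-two-neighbors property of H
  have hdeg : ∀ x : V, ∃ a b : V, a ≠ b ∧ H.Adj x a ∧ H.Adj x b ∧
      (∀ c : V, H.Adj x c → c = a ∨ c = b) := by
    intro x
    have hcard0 := hFdeg x
    rw [edgeDeg] at hcard0
    have hcard : (F.filter (fun e => x ∈ e)).card = 2 := by
      convert hcard0 using 2
      ext e
      simp [Finset.mem_filter]
    obtain ⟨e₁, e₂, he12, hfe⟩ := Finset.card_eq_two.mp hcard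
    have he₁ : e₁ ∈ F.filter (fun e => x ∈ e) := by
      rw [hfe]; simp
    have he₂ : e₂ ∈ F.filter (fun e => x ∈ e) := by
      rw [hfe]; simp
    rw [Finset.mem_filter] at he₁ he₂
    obtain ⟨a, ha⟩ := Sym2.mem_iff_exists.mp he₁.2
    obtain ⟨b, hb⟩ := Sym2.mem_iff_exists.mp he₂.2
    have hd₁ : ¬ e₁.IsDiag := G.not_isDiag_of_mem_edgeSet
      (by simpa [SimpleGraph.mem_edgeFinset] using hFsub he₁.1)
    have hd₂ : ¬ e₂.IsDiag := G.not_isDiag_of_mem_edgeSet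
      (by simpa [SimpleGraph.mem_edgeFinset] using hFsub he₂.1)
    have hax : a ≠ x := by rintro rfl; exact hd₁ (by rw [ha]; exact Sym2.mk_isDiag_iff.mpr rfl)
    have hbx : b ≠ x := by rintro rfl; exact hd₂ (by rw [hb]; exact Sym2.mk_isDiag_iff.mpr rfl)
    have hab : a ≠ b := by
      rintro rfl
      exact he12 (by rw [ha, hb])
    refine ⟨a, b, hab, ?_, ?_, ?_⟩
    · rw [hH, SimpleGraph.fromEdgeSet_adj]
      exact ⟨by rw [← ha]; exact_mod_cast he₁.1, hax.symm⟩
    · rw [hH, SimpleGraph.fromEdgeSet_adj]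
      exact ⟨by rw [← hb]; exact_mod_cast he₂.1, hbx.symm⟩
    · intro c hc
      rw [hH, SimpleGraph.fromEdgeSet_adj] at hc
      have hcmem : s(x, c) ∈ ({e₁, e₂} : Finset (Sym2 V)) := by
        rw [← hfe, Finset.mem_filter]
        exact ⟨by exact_mod_cast hc.1, by simp⟩

      simp only [Finset.mem_insert, Finset.mem_singleton] at hcmem
      rcases hcmem with h | h
      · left
        rw [ha, Sym2.eq_iff] at h
        rcases h with ⟨_, h2⟩ | ⟨_, h2⟩
        · exact h2
        · exact absurd h2.symm hc.2
      · right
        rw [hb, Sym2.eq_iff] at h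
        rcases h with ⟨_, h2⟩ | ⟨_, h2⟩
        · exact h2
        · exact absurd h2.symm hc.2
  -- H ≤ G
  have hle : H ≤ G := by
    intro a b hab
    rw [hH, SimpleGraph.fromEdgeSet_adj] at hab
    have := hFsub hab.1
    rwa [SimpleGraph.mem_edgeFinset, SimpleGraph.mem_edgeSet] at this
  -- component sizes
  set nK : H.ConnectedComponent → ℕ :=
    fun K => (Finset.univ.filter (fun v : V => H.connectedComponentMk v = K)).card with hnK
  -- every component contains a vertex on a cycle of length ≤ component size
  have main : ∀ K : H.ConnectedComponent, ∃ y : V, H.connectedComponentMk y = K ∧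
      ∃ c : H.Walk y y, c.IsCycle ∧ c.length ≤ nK K := by
    intro K
    obtain ⟨v, rfl⟩ := Quot.exists_rep K
    obtain ⟨y, c, hcyc, hreach⟩ := exists_cycle_in_component H hdeg v
    have hyK : H.connectedComponentMk y = H.connectedComponentMk v :=
      SimpleGraph.ConnectedComponent.sound (hreach y (SimpleGraph.Walk.start_mem_support c))
    refine ⟨y, hyK, c, hcyc, ?_⟩
    have hnodup : c.support.tail.Nodup := ((SimpleGraph.Walk.isCycle_def c).mp hcyc).2.2
    have hlen : c.length = c.support.tail.length := by
      have := c.length_support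
      simp [List.length_tail, this]
    rw [hlen, ← List.toFinset_card_of_nodup hnodup]
    apply Finset.card_le_card
    intro z hz
    rw [List.mem_toFinset] at hz
    rw [Finset.mem_filter]
    exact ⟨Finset.mem_univ z,
      SimpleGraph.ConnectedComponent.sound (hreach z (List.mem_of_mem_tail hz))⟩
  -- choose such a vertex for each component
  choose g hg1 hg2 using main
  -- counting
  have hfiber : ∑ K : H.ConnectedComponent, nK K = n := by
    rw [hnK, hn]
    exact (Finset.card_eq_sum_card_fiberwise (f := H.connectedComponentMk)
      (fun v _ => Finset.mem_univ _)).symm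
  set S : Finset H.ConnectedComponent := Finset.univ.filter (fun K => nK K ≤ ψ) with hS
  set L : Finset H.ConnectedComponent := Finset.univ.filter (fun K => ¬ nK K ≤ ψ) with hL
  have hSL : S.card + L.card = Fintype.card H.ConnectedComponent := by
    rw [hS, hL]
    simpa using Finset.card_filter_add_card_filter_not
      (s := (Finset.univ : Finset H.ConnectedComponent)) (p := fun K => nK K ≤ ψ)
  -- small components inject into vertices on short cycles
  have hScard : S.card ≤ cyclesUpTo G ψ := by
    rw [cyclesUpTo]
    apply Finset.card_le_card_of_injOn g
    · intro K hK
      rw [hS, Finset.mem_coe, Finset.mem_filter] at hK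
      obtain ⟨c, hcyc, hclen⟩ := hg2 K
      rw [Finset.mem_coe, Finset.mem_filter]
      refine ⟨Finset.mem_univ _, c.mapLe hle, ?_, ?_⟩
      · exact (SimpleGraph.Walk.mapLe_isCycle hle).mpr hcyc
      · rw [SimpleGraph.Walk.mapLe, SimpleGraph.Walk.length_map]
        exact le_trans hclen hK.2
    · intro K _ K' _ hgg
      rw [← hg1 K, ← hg1 K', hgg]
  -- large components
  have hLcard : ψ * L.card ≤ n := by
    calc ψ * L.card = L.card • ψ := by rw [smul_eq_mul, mul_comm]
    _ ≤ ∑ K ∈ L, nK K := Finset.card_nsmul_le_sum L nK ψ (fun K hK => by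
        rw [hL, Finset.mem_filter] at hK; omega)
    _ ≤ ∑ K : H.ConnectedComponent, nK K :=
        Finset.sum_le_sum_of_subset (Finset.filter_subset _ _)
    _ = n := hfiber
  have hkey : ψ * Fintype.card H.ConnectedComponent ≤ 2 * n := by
    have h1 : ψ * S.card ≤ n := le_trans (Nat.mul_le_mul_left ψ hScard) hψ.1
    calc ψ * Fintype.card H.ConnectedComponent = ψ * S.card + ψ * L.card := by
          rw [← hSL]; ring
    _ ≤ n + n := Nat.add_le_add h1 hLcard
    _ = 2 * n := by ring
  -- conclude in ℝ
  have hψpos : (0 : ℝ) < ψ := by exact_mod_cast hψ1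
  rw [Nat.card_eq_fintype_card, le_div_iff₀ hψpos]
  calc (Fintype.card H.ConnectedComponent : ℝ) * ψ
      = ((ψ * Fintype.card H.ConnectedComponent : ℕ) : ℝ) := by push_cast; ring
  _ ≤ ((2 * n : ℕ) : ℝ) := by exact_mod_cast hkey
  _ = 2 * (n : ℝ) := by push_cast; ring
end

section
/- Suppose G is a connected graph on n vertices with λ_2(G) = 0 (G contains a 2-factor) but κ_2(G) > 1, where κ_2(G) is the minimum number of connected components over all 2-factors of G. Then there exist vertices w ≠ z with wz not an edge of G such that κ_2(G + wz) < κ_2(G). -/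
open Finset
open scoped Classical

/-- A 2-factor: a spanning set of edges of `G` in which every vertex has degree exactly 2. -/
def IsTwoFactor {V : Type*} [Fintype V] (G : SimpleGraph V) (F : Finset (Sym2 V)) : Prop :=
  F ⊆ G.edgeFinset ∧ ∀ v : V, edgeDeg F v = 2

/-- Number of connected components of an edge set. -/
noncomputable def kappaEdges {V : Type*} (F : Finset (Sym2 V)) : ℕ :=
  Nat.card (SimpleGraph.fromEdgeSet (↑F : Set (Sym2 V))).ConnectedComponent

/-- `κ₂(G)`: the minimum number of connected components over all 2-factors of `G`. -/
noncomputable def kappaTwo {V : Type*} [Fintype V] (G : SimpleGraph V) : ℕ :=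
  sInf {c : ℕ | ∃ F : Finset (Sym2 V), IsTwoFactor G F ∧ kappaEdges F = c}

section Helpers
variable {V : Type*}

lemma edgeDeg_mono (A B : Finset (Sym2 V)) (h : A ⊆ B) (x : V) : edgeDeg A x ≤ edgeDeg B x :=
  Finset.card_le_card (Finset.filter_subset_filter _ h)

lemma filter_sdiff' (s t : Finset (Sym2 V)) (p : Sym2 V → Prop) [DecidablePred p] :
    (s \ t).filter p = s.filter p \ t.filter p := by
  ext e; simp [Finset.mem_filter, Finset.mem_sdiff]; tauto

lemma edgeDeg_sdiff (F B : Finset (Sym2 V)) (h : B ⊆ F) (x : V) :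
    edgeDeg (F \ B) x = edgeDeg F x - edgeDeg B x := by
  unfold edgeDeg
  rw [filter_sdiff', Finset.card_sdiff_of_subset (Finset.filter_subset_filter _ h)]

lemma edgeDeg_union (A B : Finset (Sym2 V)) (h : Disjoint A B) (x : V) :
    edgeDeg (A ∪ B) x = edgeDeg A x + edgeDeg B x := by
  unfold edgeDeg
  rw [Finset.filter_union, Finset.card_union_of_disjoint
    (Finset.disjoint_filter_filter h)]

lemma edgeDeg_singleton (e : Sym2 V) (x : V) :
    edgeDeg {e} x = if x ∈ e then 1 else 0 := by
  unfold edgeDeg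
  rw [Finset.filter_singleton]
  split <;> simp

lemma edgeDeg_pair (e₁ e₂ : Sym2 V) (hne : e₁ ≠ e₂) (x : V) :
    edgeDeg {e₁, e₂} x = (if x ∈ e₁ then 1 else 0) + (if x ∈ e₂ then 1 else 0) := by
  have : ({e₁, e₂} : Finset (Sym2 V)) = {e₁} ∪ {e₂} := rfl
  rw [this, edgeDeg_union _ _ (by simpa using hne), edgeDeg_singleton, edgeDeg_singleton]

lemma degree_fromEdgeSet [Fintype V] (F : Finset (Sym2 V)) (hd : ∀ e ∈ F, ¬ e.IsDiag) (v : V) :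
    (SimpleGraph.fromEdgeSet (↑F : Set (Sym2 V))).degree v = edgeDeg F v := by
  classical
  rw [← SimpleGraph.card_neighborFinset_eq_degree]
  apply Finset.card_bij (fun w _ => s(v, w))
  · intro w hw
    rw [SimpleGraph.mem_neighborFinset, SimpleGraph.fromEdgeSet_adj] at hw
    simp only [Finset.mem_filter]
    exact ⟨by exact_mod_cast hw.1, Sym2.mem_mk_left v w⟩
  · intro w₁ h₁ w₂ h₂ he
    exact Sym2.congr_right.mp he
  · intro e he
    simp only [Finset.mem_filter] at he
    obtain ⟨heF, hv⟩ := he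
    refine ⟨Sym2.Mem.other hv, ?_, Sym2.other_spec hv⟩
    rw [SimpleGraph.mem_neighborFinset, SimpleGraph.fromEdgeSet_adj]
    refine ⟨by rw [Sym2.other_spec hv]; exact_mod_cast heF, ?_⟩
    intro hvw
    apply hd e heF
    rw [← Sym2.other_spec hv, ← hvw]
    exact Sym2.mk_isDiag_iff.mpr rfl

lemma exists_odd_reachable [Fintype V] (A : SimpleGraph V) (u : V) (hu : Odd (A.degree u)) :
    ∃ x, x ≠ u ∧ Odd (A.degree x) ∧ A.Reachable u x := by
  classical
  let A' : SimpleGraph V :=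
    { Adj := fun x y => A.Adj x y ∧ A.Reachable u x
      symm := ⟨fun x y h => ⟨h.1.symm, h.2.trans h.1.reachable⟩⟩
      loopless := ⟨fun x h => A.loopless.irrefl x h.1⟩ }
  have hdeg : ∀ x, A.Reachable u x → A'.degree x = A.degree x := by
    intro x hx
    rw [← SimpleGraph.card_neighborFinset_eq_degree, ← SimpleGraph.card_neighborFinset_eq_degree]
    congr 1
    ext y
    simp only [SimpleGraph.mem_neighborFinset]
    exact ⟨fun h => h.1, fun h => ⟨h, hx⟩⟩
  have hdeg0 : ∀ x, ¬ A.Reachable u x → A'.degree x = 0 := by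
    intro x hx
    rw [← SimpleGraph.card_neighborFinset_eq_degree, Finset.card_eq_zero]
    ext y
    simp only [SimpleGraph.mem_neighborFinset, Finset.notMem_empty, iff_false]
    exact fun h => hx h.2
  have heven := SimpleGraph.even_card_odd_degree_vertices A'
  have humem : u ∈ Finset.univ.filter (fun v => Odd (A'.degree v)) := by
    simp only [Finset.mem_filter, Finset.mem_univ, true_and]
    rwa [hdeg u (SimpleGraph.Reachable.refl u)]
  have hcard : 1 < (Finset.univ.filter (fun v => Odd (A'.degree v))).card := by
    have h1 : 0 < (Finset.univ.filter (fun v => Odd (A'.degree v))).card :=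
      Finset.card_pos.mpr ⟨u, humem⟩
    obtain ⟨r, hr⟩ := heven
    omega
  obtain ⟨x, hx, hxu⟩ := Finset.exists_mem_ne hcard u
  simp only [Finset.mem_filter, Finset.mem_univ, true_and] at hx
  by_cases hr : A.Reachable u x
  · exact ⟨x, hxu, by rwa [hdeg x hr] at hx, hr⟩
  · rw [hdeg0 x hr] at hx
    exact absurd hx (by simp)

lemma reachable_of_adj_imp {H H' : SimpleGraph V}
    (h : ∀ x y, H.Adj x y → H'.Reachable x y) {x y : V} (hr : H.Reachable x y) :
    H'.Reachable x y := by
  obtain ⟨w⟩ := hr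
  induction w with
  | nil => exact SimpleGraph.Reachable.refl _
  | cons hadj p ih => exact (h _ _ hadj).trans ih

lemma card_cc_lt {H H' : SimpleGraph V} [Finite V]
    (ha : ∀ x y, H.Adj x y → H'.Reachable x y)
    {u v : V} (hb : H'.Reachable u v) (hc : ¬ H.Reachable u v) :
    Nat.card H'.ConnectedComponent < Nat.card H.ConnectedComponent := by
  classical
  have hwd : ∀ (a b : V) (p : H.Walk a b), p.IsPath →
      H'.connectedComponentMk a = H'.connectedComponentMk b := by
    intro a b p _
    exact SimpleGraph.ConnectedComponent.eq.mpr (reachable_of_adj_imp ha ⟨p⟩)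
  let g : H.ConnectedComponent → H'.ConnectedComponent :=
    SimpleGraph.ConnectedComponent.lift (fun x => H'.connectedComponentMk x) hwd
  have hg : ∀ x : V, g (H.connectedComponentMk x) = H'.connectedComponentMk x := fun _ => rfl
  have hsurj : Function.Surjective g := by
    intro c
    obtain ⟨x, rfl⟩ := c.exists_rep
    exact ⟨H.connectedComponentMk x, rfl⟩
  have hle : Nat.card H'.ConnectedComponent ≤ Nat.card H.ConnectedComponent :=
    Nat.card_le_card_of_surjective g hsurj
  rcases lt_or_eq_of_le hle with hlt | heq
  · exact hlt
  · exfalso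
    have hbij : Function.Bijective g :=
      (Nat.bijective_iff_surjective_and_card g).mpr ⟨hsurj, heq.symm⟩
    have : H.connectedComponentMk u = H.connectedComponentMk v := by
      apply hbij.1
      rw [hg, hg]
      exact SimpleGraph.ConnectedComponent.eq.mpr hb
    exact hc (SimpleGraph.ConnectedComponent.eq.mp this)

end Helpers

theorem stmt4 {V : Type*} [Fintype V] (G : SimpleGraph V)
    (hconn : G.Connected)
    (h2f : ∃ F : Finset (Sym2 V), IsTwoFactor G F)
    (hκ : 1 < kappaTwo G) :
    ∃ w z : V, w ≠ z ∧ ¬ G.Adj w z ∧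
      kappaTwo (G ⊔ SimpleGraph.fromEdgeSet {s(w, z)}) < kappaTwo G := by
  classical
  -- a minimal 2-factor
  have hSne : Set.Nonempty {c : ℕ | ∃ F : Finset (Sym2 V), IsTwoFactor G F ∧ kappaEdges F = c} := by
    obtain ⟨F, hF⟩ := h2f
    exact ⟨kappaEdges F, F, hF, rfl⟩
  obtain ⟨F, hF, hFk⟩ := Nat.sInf_mem hSne
  set H := SimpleGraph.fromEdgeSet (↑F : Set (Sym2 V)) with hHdef
  have hFkκ : Nat.card H.ConnectedComponent = kappaTwo G := hFk
  have hdiagF : ∀ e ∈ F, ¬ e.IsDiag := by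
    intro e he
    exact SimpleGraph.not_isDiag_of_mem_edgeSet G (SimpleGraph.mem_edgeFinset.mp (hF.1 he))
  -- a G-edge between two H-components
  have hcross : ∃ u v : V, G.Adj u v ∧ ¬ H.Reachable u v := by
    by_contra hcon
    push_neg at hcon
    have hpre : ∀ x y : V, H.Reachable x y := fun x y =>
      reachable_of_adj_imp hcon (hconn.preconnected x y)
    have hsub : ∀ c d : H.ConnectedComponent, c = d := by
      intro c d
      obtain ⟨x, rfl⟩ := c.exists_rep
      obtain ⟨y, rfl⟩ := d.exists_rep
      exact SimpleGraph.ConnectedComponent.eq.mpr (hpre x y)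
    obtain ⟨x0⟩ := hconn.nonempty
    have h1 : Nat.card H.ConnectedComponent = 1 :=
      Nat.card_eq_one_iff_unique.mpr ⟨⟨hsub⟩, ⟨H.connectedComponentMk x0⟩⟩
    rw [hFkκ] at h1
    omega
  obtain ⟨u, v, hadj, hnr⟩ := hcross
  have hune : u ≠ v := hadj.ne
  -- neighbors in F
  have hpicku : ∃ u' : V, s(u, u') ∈ F := by
    have h2 := hF.2 u
    have : (F.filter (fun e => u ∈ e)).Nonempty := by
      rw [← Finset.card_pos]; unfold edgeDeg at h2; omega
    obtain ⟨e, he⟩ := this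
    rw [Finset.mem_filter] at he
    exact ⟨Sym2.Mem.other he.2, by rw [Sym2.other_spec he.2]; exact he.1⟩
  obtain ⟨u', he₁F⟩ := hpicku
  have hpickv : ∃ v' : V, s(v, v') ∈ F := by
    have h2 := hF.2 v
    have : (F.filter (fun e => v ∈ e)).Nonempty := by
      rw [← Finset.card_pos]; unfold edgeDeg at h2; omega
    obtain ⟨e, he⟩ := this
    rw [Finset.mem_filter] at he
    exact ⟨Sym2.Mem.other he.2, by rw [Sym2.other_spec he.2]; exact he.1⟩
  obtain ⟨v', he₂F⟩ := hpickv
  have huu' : u ≠ u' := by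
    intro h; exact hdiagF _ he₁F (by rw [← h]; exact Sym2.mk_isDiag_iff.mpr rfl)
  have hvv' : v ≠ v' := by
    intro h; exact hdiagF _ he₂F (by rw [← h]; exact Sym2.mk_isDiag_iff.mpr rfl)
  have hru' : H.Reachable u u' := SimpleGraph.Adj.reachable (by
    rw [hHdef, SimpleGraph.fromEdgeSet_adj]; exact ⟨by exact_mod_cast he₁F, huu'⟩)
  have hrv' : H.Reachable v v' := SimpleGraph.Adj.reachable (by
    rw [hHdef, SimpleGraph.fromEdgeSet_adj]; exact ⟨by exact_mod_cast he₂F, hvv'⟩)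
  have hnuv' : ¬ H.Reachable u v' := fun h => hnr (h.trans hrv'.symm)
  have hnu'v : ¬ H.Reachable u' v := fun h => hnr (hru'.trans h)
  have hnu'v' : ¬ H.Reachable u' v' := fun h => hnr (hru'.trans (h.trans hrv'.symm))
  have huv' : u ≠ v' := fun h => hnuv' (h ▸ SimpleGraph.Reachable.refl u)
  have hu'v : u' ≠ v := fun h => hnu'v (h ▸ SimpleGraph.Reachable.refl u')
  have hu'v' : u' ≠ v' := fun h => hnu'v' (h ▸ SimpleGraph.Reachable.refl u')
  -- edges
  have hee : s(u, u') ≠ s(v, v') := by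
    intro h; rcases Sym2.eq_iff.mp h with ⟨rfl, rfl⟩ | ⟨rfl, rfl⟩
    · exact hune rfl
    · exact huv' rfl
  have hff : s(u, v) ≠ s(u', v') := by
    intro h; rcases Sym2.eq_iff.mp h with ⟨rfl, rfl⟩ | ⟨rfl, rfl⟩
    · exact huu' rfl
    · exact huv' rfl
  have hf₁F : s(u, v) ∉ F := by
    intro h
    exact hnr (SimpleGraph.Adj.reachable (by
      rw [hHdef, SimpleGraph.fromEdgeSet_adj]; exact ⟨by exact_mod_cast h, hune⟩))
  have hf₂F : s(u', v') ∉ F := by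
    intro h
    exact hnu'v' (SimpleGraph.Adj.reachable (by
      rw [hHdef, SimpleGraph.fromEdgeSet_adj]; exact ⟨by exact_mod_cast h, hu'v'⟩))
  set F₂ : Finset (Sym2 V) := F \ {s(u, u'), s(v, v')} with hF₂def
  set F' : Finset (Sym2 V) := F₂ ∪ {s(u, v), s(u', v')} with hF'def
  have hpair : ({s(u, u'), s(v, v')} : Finset (Sym2 V)) ⊆ F := by
    intro e he
    rcases Finset.mem_insert.mp he with rfl | he
    · exact he₁F
    · rw [Finset.mem_singleton] at he; exact he ▸ he₂F
  have hdisj : Disjoint F₂ ({s(u, v), s(u', v')} : Finset (Sym2 V)) := by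
    rw [Finset.disjoint_right]
    intro e he heF₂
    have heF : e ∈ F := (Finset.sdiff_subset) heF₂
    rcases Finset.mem_insert.mp he with rfl | he
    · exact hf₁F heF
    · rw [Finset.mem_singleton] at he; exact hf₂F (he ▸ heF)
  have hF₂sub : F₂ ⊆ F := Finset.sdiff_subset
  have hF₂sub' : F₂ ⊆ F' := Finset.subset_union_left
  -- degree computations
  have hdegF₂ : ∀ x : V, edgeDeg F₂ x =
      2 - ((if x = u ∨ x = u' then 1 else 0) + (if x = v ∨ x = v' then 1 else 0)) := by
    intro x
    rw [hF₂def, edgeDeg_sdiff _ _ hpair, hF.2 x, edgeDeg_pair _ _ hee]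
    simp only [Sym2.mem_iff]
  have hdegF' : ∀ x : V, edgeDeg F' x = 2 := by
    intro x
    rw [hF'def, edgeDeg_union _ _ hdisj, hdegF₂ x, edgeDeg_pair _ _ hff]
    simp only [Sym2.mem_iff]
    rcases eq_or_ne x u with rfl | hxu <;> rcases eq_or_ne x u' with rfl | hxu' <;>
      rcases eq_or_ne x v with rfl | hxv <;> rcases eq_or_ne x v' with rfl | hxv' <;>
      simp_all
  -- the shortcut graph on F₂ and parity
  set A := SimpleGraph.fromEdgeSet (↑F₂ : Set (Sym2 V)) with hAdef
  have hdiagF₂ : ∀ e ∈ F₂, ¬ e.IsDiag := fun e he => hdiagF e (hF₂sub he)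
  have hAdeg : ∀ x : V, A.degree x = edgeDeg F₂ x := degree_fromEdgeSet F₂ hdiagF₂
  have hAleH : A ≤ H := SimpleGraph.fromEdgeSet_mono (by exact_mod_cast hF₂sub)
  have hAuu' : A.Reachable u u' := by
    have hAu : A.degree u = 1 := by
      rw [hAdeg, hdegF₂]
      simp [hune, huv']
    obtain ⟨x, hxu, hodd, hreach⟩ := exists_odd_reachable A u (by convert (show Odd (A.degree u) by rw [hAu]; exact odd_one))
    replace hodd : Odd (A.degree x) := by convert hodd
    rw [hAdeg, hdegF₂] at hodd
    have hHux : H.Reachable u x := hreach.mono hAleH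
    rcases eq_or_ne x u' with rfl | hxu'
    · exact hreach
    · exfalso
      rcases eq_or_ne x v with rfl | hxv
      · exact hnr hHux
      rcases eq_or_ne x v' with rfl | hxv'
      · exact hnuv' hHux
      simp [hxu, hxu', hxv, hxv'] at hodd
      exact absurd hodd (by decide)
  have hAvv' : A.Reachable v v' := by
    have hAv : A.degree v = 1 := by
      rw [hAdeg, hdegF₂]
      simp [hune.symm, hu'v.symm]
    obtain ⟨x, hxv, hodd, hreach⟩ := exists_odd_reachable A v (by convert (show Odd (A.degree v) by rw [hAv]; exact odd_one))
    replace hodd : Odd (A.degree x) := by convert hodd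
    rw [hAdeg, hdegF₂] at hodd
    have hHvx : H.Reachable v x := hreach.mono hAleH
    rcases eq_or_ne x v' with rfl | hxv'
    · exact hreach
    · exfalso
      rcases eq_or_ne x u with rfl | hxu
      · exact hnr hHvx.symm
      rcases eq_or_ne x u' with rfl | hxu'
      · exact hnu'v hHvx.symm
      simp [hxu, hxu', hxv, hxv'] at hodd
      exact absurd hodd (by decide)
  -- the new graph
  set H' := SimpleGraph.fromEdgeSet (↑F' : Set (Sym2 V)) with hH'def
  have hAleH' : A ≤ H' := SimpleGraph.fromEdgeSet_mono (by exact_mod_cast hF₂sub')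
  have ha : ∀ x y : V, H.Adj x y → H'.Reachable x y := by
    intro x y hxy
    rw [hHdef, SimpleGraph.fromEdgeSet_adj] at hxy
    obtain ⟨hxyF, hxyne⟩ := hxy
    have hxyF : s(x, y) ∈ F := by exact_mod_cast hxyF
    by_cases h1 : s(x, y) = s(u, u')
    · rcases Sym2.eq_iff.mp h1 with ⟨rfl, rfl⟩ | ⟨rfl, rfl⟩
      · exact hAuu'.mono hAleH'
      · exact (hAuu'.mono hAleH').symm
    by_cases h2 : s(x, y) = s(v, v')
    · rcases Sym2.eq_iff.mp h2 with ⟨rfl, rfl⟩ | ⟨rfl, rfl⟩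
      · exact hAvv'.mono hAleH'
      · exact (hAvv'.mono hAleH').symm
    have hxyF₂ : s(x, y) ∈ F₂ := by
      rw [hF₂def, Finset.mem_sdiff]
      refine ⟨hxyF, ?_⟩
      intro hmem
      rcases Finset.mem_insert.mp hmem with h | h
      · exact h1 h
      · rw [Finset.mem_singleton] at h; exact h2 h
    exact SimpleGraph.Adj.reachable (by
      rw [hH'def, SimpleGraph.fromEdgeSet_adj]
      exact ⟨by exact_mod_cast hF₂sub' hxyF₂, hxyne⟩)
  have hf₁F' : s(u, v) ∈ F' := by
    rw [hF'def]; exact Finset.mem_union_right _ (Finset.mem_insert_self _ _)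
  have hf₂F' : s(u', v') ∈ F' := by
    rw [hF'def]
    exact Finset.mem_union_right _ (Finset.mem_insert_of_mem (Finset.mem_singleton_self _))
  have hb : H'.Reachable u v := SimpleGraph.Adj.reachable (by
    rw [hH'def, SimpleGraph.fromEdgeSet_adj]; exact ⟨by exact_mod_cast hf₁F', hune⟩)
  have hlt : kappaEdges F' < kappaTwo G := by
    rw [← hFkκ]
    exact card_cc_lt ha hb hnr
  -- case split on whether u'v' is already an edge of G
  by_cases hadj' : G.Adj u' v'
  · exfalso
    have hsubG : F' ⊆ G.edgeFinset := by
      intro e he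
      rcases Finset.mem_union.mp (hF'def ▸ he) with h | h
      · exact hF.1 (hF₂sub h)
      · rcases Finset.mem_insert.mp h with rfl | h
        · exact SimpleGraph.mem_edgeFinset.mpr hadj
        · rw [Finset.mem_singleton] at h
          exact h ▸ SimpleGraph.mem_edgeFinset.mpr hadj'
    have : kappaTwo G ≤ kappaEdges F' := Nat.sInf_le ⟨F', ⟨hsubG, hdegF'⟩, rfl⟩
    omega
  · refine ⟨u', v', hu'v', hadj', ?_⟩
    set G' := G ⊔ SimpleGraph.fromEdgeSet {s(u', v')} with hG'def
    have hsubG' : ∀ e ∈ F', e ∈ G'.edgeSet := by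
      intro e he
      rw [hG'def, SimpleGraph.edgeSet_sup]
      rcases Finset.mem_union.mp (hF'def ▸ he) with h | h
      · exact Or.inl (SimpleGraph.mem_edgeFinset.mp (hF.1 (hF₂sub h)))
      · rcases Finset.mem_insert.mp h with rfl | h
        · exact Or.inl (G.mem_edgeSet.mpr hadj)
        · rw [Finset.mem_singleton] at h
          subst h
          right
          rw [SimpleGraph.edgeSet_fromEdgeSet]
          refine ⟨rfl, ?_⟩
          simp only [Sym2.diagSet, Set.mem_setOf_eq, Sym2.mk_isDiag_iff]
          exact hu'v'
    have hTF' : IsTwoFactor G' F' := by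
      constructor
      · intro e he
        simp only [SimpleGraph.mem_edgeFinset]
        exact hsubG' e he
      · exact hdegF'
    have hle : kappaTwo G' ≤ kappaEdges F' := Nat.sInf_le ⟨F', hTF', rfl⟩
    omega
end

section
/- Let k ≥ 2 and 0 < γ < 1/2. Suppose H is an n-vertex graph with minimum degree at least k+2 that is (13/12, γ)-sparse and has λ_k(H) > 0. Then for n sufficiently large, the number of non-edges e of H with λ_k(H + e) < λ_k(H) is at least (γ²/(2(k+2)²))n². -/
open Finset
open scoped Classical
set_option linter.unusedSectionVars false
set_option maxHeartbeats 1000000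

/-- Number of edges of `G` with both endpoints in `S`. -/
noncomputable def edgesIn {V : Type*} [Fintype V] (G : SimpleGraph V) (S : Finset V) : ℕ :=
  (G.edgeFinset.filter (fun e => ∀ v ∈ e, v ∈ S)).card

/-- A `k`-matching. -/
def IsKMatching {V : Type*} [Fintype V] (G : SimpleGraph V) (k : ℕ) (F : Finset (Sym2 V)) : Prop :=
  F ⊆ G.edgeFinset ∧ ∀ v : V, edgeDeg F v ≤ k

/-- Maximum size of a `k`-matching in `G`. -/
noncomputable def maxKMatch {V : Type*} [Fintype V] (G : SimpleGraph V) (k : ℕ) : ℕ :=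
  (G.edgeFinset.powerset.filter (fun F => IsKMatching G k F)).sup Finset.card

/-- The `k`-matching deficiency `λ_k(G)`. -/
noncomputable def lamK {V : Type*} [Fintype V] (G : SimpleGraph V) (k : ℕ) : ℕ :=
  k * Fintype.card V / 2 - maxKMatch G k

section Aux
variable {V : Type*} [Fintype V]

lemma edgeDeg_insert (F : Finset (Sym2 V)) (e : Sym2 V) (he : e ∉ F) (v : V) :
    edgeDeg (insert e F) v = edgeDeg F v + (if v ∈ e then 1 else 0) := by
  unfold edgeDeg
  rw [Finset.filter_insert]
  split_ifs with h
  · rw [Finset.card_insert_of_notMem (by simp [he])]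
  · simp

lemma edgeDeg_erase (F : Finset (Sym2 V)) (f : Sym2 V) (hf : f ∈ F) (v : V) :
    edgeDeg F v = edgeDeg (F.erase f) v + (if v ∈ f then 1 else 0) := by
  conv_lhs => rw [← Finset.insert_erase hf]
  rw [edgeDeg_insert _ _ (Finset.notMem_erase f F)]

/-- members of a nondiagonal sym2 within a set containing them -/
lemma filter_mem_sym2_card {e : Sym2 V} (hd : ¬ e.IsDiag) (S : Finset V)
    (hS : ∀ v ∈ e, v ∈ S) : (S.filter (fun v => v ∈ e)).card = 2 := by
  induction e with
  | _ a b =>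
    have hab : a ≠ b := by simpa using hd
    have : S.filter (fun v => v ∈ s(a, b)) = {a, b} := by
      ext v
      simp only [Finset.mem_filter, Sym2.mem_iff, Finset.mem_insert, Finset.mem_singleton]
      constructor
      · tauto
      · rintro (rfl | rfl)
        · exact ⟨hS _ (by simp), Or.inl rfl⟩
        · exact ⟨hS _ (by simp), Or.inr rfl⟩
    rw [this, Finset.card_pair hab]

lemma sum_edgeDeg {G : SimpleGraph V} (F : Finset (Sym2 V)) (hF : F ⊆ G.edgeFinset) :
    ∑ v : V, edgeDeg F v = 2 * F.card := by
  have h1 : ∑ v : V, edgeDeg F v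
      = ∑ e ∈ F, ((Finset.univ : Finset V).filter (fun v => v ∈ e)).card := by
    unfold edgeDeg
    simp_rw [Finset.card_filter]
    rw [Finset.sum_comm]
  rw [h1, Finset.sum_congr rfl (fun e he => ?_), Finset.sum_const, smul_eq_mul, mul_comm]
  exact filter_mem_sym2_card (SimpleGraph.not_isDiag_of_mem_edgeFinset (hF he)) _ (by simp)

lemma exists_maxKMatch (G : SimpleGraph V) (k : ℕ) :
    ∃ F, IsKMatching G k F ∧ F.card = maxKMatch G k := by
  classical
  have hne : (G.edgeFinset.powerset.filter (fun F => IsKMatching G k F)).Nonempty := by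
    refine ⟨∅, ?_⟩
    rw [Finset.mem_filter]
    exact ⟨Finset.empty_mem_powerset _, Finset.empty_subset _, fun v => by simp [edgeDeg]⟩
  obtain ⟨F, hF, hcard⟩ := Finset.exists_mem_eq_sup _ hne Finset.card
  simp only [Finset.mem_filter, Finset.mem_powerset] at hF
  exact ⟨F, hF.2, hcard.symm⟩

lemma card_le_maxKMatch {G : SimpleGraph V} {k : ℕ} {F : Finset (Sym2 V)}
    (h : IsKMatching G k F) : F.card ≤ maxKMatch G k := by
  apply Finset.le_sup
  simp only [Finset.mem_filter, Finset.mem_powerset]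
  exact ⟨h.1, h⟩

end Aux
section Aux
variable {V : Type*} [Fintype V]

/-- A maximum `k`-matching. -/
def IsMaxM (G : SimpleGraph V) (k : ℕ) (F : Finset (Sym2 V)) : Prop :=
  IsKMatching G k F ∧ F.card = maxKMatch G k

/-- There is a maximum `k`-matching leaving both `x` and `u` deficient
(with deficiency at least 2 at `x` if `u = x`). -/
def PP (G : SimpleGraph V) (k : ℕ) (x u : V) : Prop :=
  ∃ F, IsMaxM G k F ∧ edgeDeg F x < k ∧ edgeDeg F u < k ∧ (u = x → edgeDeg F x + 1 < k)

lemma edge_mem_repr {G : SimpleGraph V} {e : Sym2 V} (he : e ∈ G.edgeFinset) {u : V}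
    (hu : u ∈ e) : ∃ w, e = s(u, w) ∧ G.Adj u w := by
  rw [SimpleGraph.mem_edgeFinset] at he
  induction e with
  | _ a b =>
    rw [Sym2.mem_iff] at hu
    rw [SimpleGraph.mem_edgeSet] at he
    rcases hu with rfl | rfl
    · exact ⟨b, rfl, he⟩
    · exact ⟨a, Sym2.eq_swap, he.symm⟩

lemma no_augment {G : SimpleGraph V} {k : ℕ} {F : Finset (Sym2 V)} (hF : IsMaxM G k F)
    {a b : V} (hadj : G.Adj a b) (ha : edgeDeg F a < k) (hb : edgeDeg F b < k) :
    s(a, b) ∈ F := by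
  by_contra h
  have hkm : IsKMatching G k (insert s(a, b) F) := by
    constructor
    · exact Finset.insert_subset (by rwa [SimpleGraph.mem_edgeFinset, SimpleGraph.mem_edgeSet])
        hF.1.1
    · intro v
      rw [edgeDeg_insert _ _ h]
      by_cases hv : v ∈ s(a, b)
      · rw [Sym2.mem_iff] at hv
        rcases hv with rfl | rfl <;> simp_all <;> omega
      · simp [hv]
        exact hF.1.2 v
  have := card_le_maxKMatch hkm
  rw [Finset.card_insert_of_notMem h, ← hF.2] at this
  omega

lemma swap_step {G : SimpleGraph V} {k : ℕ} {F : Finset (Sym2 V)} (hF : IsMaxM G k F)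
    {x u w : V} (hx : edgeDeg F x < k) (hu : edgeDeg F u < k)
    (hux : u = x → edgeDeg F x + 1 < k) (hadj : G.Adj u w) (hnF : s(u, w) ∉ F) :
    edgeDeg F w = k ∧ ∀ f ∈ F, w ∈ f → ∀ v, f = s(w, v) → PP G k x v := by
  have hw : edgeDeg F w = k := by
    rcases lt_or_eq_of_le (hF.1.2 w) with h | h
    · exact absurd (no_augment hF hadj hu h) hnF
    · exact h
  refine ⟨hw, fun f hf hwf v hfv => ?_⟩
  have hvadj : G.Adj w v := by
    have := hF.1.1 hf
    rw [hfv] at this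
    rwa [SimpleGraph.mem_edgeFinset, SimpleGraph.mem_edgeSet] at this
  have hvw : v ≠ w := fun h => by exact hvadj.ne h.symm
  have hvu : v ≠ u := by
    rintro rfl
    rw [hfv, Sym2.eq_swap] at hf
    exact hnF hf
  have huw : u ≠ w := hadj.ne
  have hxw : x ≠ w := fun h => by rw [h, hw] at hx; omega
  set e := s(u, w) with he
  have hef : e ∉ F.erase f := fun h => hnF (Finset.mem_of_mem_erase h)
  set F' := insert e (F.erase f) with hF'
  have hdeg : ∀ z, edgeDeg F' z + (if z ∈ f then 1 else 0)
      = edgeDeg F z + (if z ∈ e then 1 else 0) := by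
    intro z
    rw [hF', edgeDeg_insert _ _ hef, edgeDeg_erase F f hf z]
    ring
  have hmemf : ∀ z, z ∈ f ↔ z = w ∨ z = v := fun z => by rw [hfv]; exact Sym2.mem_iff
  have hmeme : ∀ z, z ∈ e ↔ z = u ∨ z = w := fun z => Sym2.mem_iff
  have hkm : IsKMatching G k F' := by
    constructor
    · refine Finset.insert_subset ?_ ((Finset.erase_subset _ _).trans hF.1.1)
      rwa [SimpleGraph.mem_edgeFinset, SimpleGraph.mem_edgeSet]
    · intro z
      have h1 := hdeg z
      by_cases hz : z ∈ e
      · rcases (hmeme z).1 hz with rfl | rfl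
        · have : ¬ z ∈ f := by rw [hmemf]; push_neg; exact ⟨fun h => huw h, fun h => hvu h.symm⟩
          simp only [hz, if_pos, this, if_neg, if_false] at h1
          omega
        · have : z ∈ f := hwf
          simp only [hz, this, if_pos] at h1
          omega
      · have h2 := hF.1.2 z
        by_cases hzf : z ∈ f <;> simp only [hz, hzf, if_pos, if_neg, if_false] at h1 <;> omega
  have hcard : F'.card = F.card := by
    rw [hF', Finset.card_insert_of_notMem hef, Finset.card_erase_of_mem hf]
    have : 0 < F.card := Finset.card_pos.2 ⟨f, hf⟩
    omega
  have hmax : IsMaxM G k F' := ⟨hkm, by rw [hcard, hF.2]⟩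
  -- degree facts in F'
  have hvf : v ∈ f := by rw [hmemf]; right; rfl
  have hve : ¬ v ∈ e := by rw [hmeme]; push_neg; exact ⟨hvu, hvw⟩
  have hdv : edgeDeg F' v + 1 = edgeDeg F v := by
    have := hdeg v; rw [if_pos hvf, if_neg hve] at this; omega
  have hdv' : edgeDeg F' v < k := by have := hF.1.2 v; omega
  by_cases hxu : x = u
  · -- x = u : x gains an edge, v ≠ x
    have hxf : ¬ x ∈ f := by
      rw [hmemf]; push_neg
      exact ⟨hxw, fun h => hvu (h.symm.trans hxu)⟩
    have hxe : x ∈ e := by rw [hmeme]; left; exact hxu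
    have hdx : edgeDeg F' x = edgeDeg F x + 1 := by
      have := hdeg x; rw [if_neg hxf, if_pos hxe] at this; omega
    have hvx : v ≠ x := fun h => hvu (h.trans hxu)
    exact ⟨F', hmax, by rw [hdx]; exact hux hxu.symm, hdv', fun h => absurd h hvx⟩
  · have hxe : ¬ x ∈ e := by rw [hmeme]; push_neg; exact ⟨hxu, hxw⟩
    by_cases hxv : x = v
    · -- x = v : deficiency at x grows
      subst hxv
      exact ⟨F', hmax, hdv', hdv', fun _ => by omega⟩
    · have hxf : ¬ x ∈ f := by rw [hmemf]; push_neg; exact ⟨hxw, hxv⟩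
      have hdx : edgeDeg F' x = edgeDeg F x := by
        have := hdeg x; rw [if_neg hxf, if_neg hxe] at this; omega
      exact ⟨F', hmax, by omega, hdv', fun h => absurd h (fun hh => hxv hh.symm)⟩

end Aux

section Aux2
variable {V : Type*} [Fintype V]

/-- handshake-type lower bound -/
lemma handshake_lower (G : SimpleGraph V) (S : Finset V) (c : ℕ)
    (h : ∀ v ∈ S, c ≤ (G.edgeFinset.filter (fun e => v ∈ e ∧ ∀ z ∈ e, z ∈ S)).card) :
    c * S.card ≤ 2 * edgesIn G S := by
  set ES := G.edgeFinset.filter (fun e => ∀ v ∈ e, v ∈ S) with hES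
  have key : ∀ v : V, (G.edgeFinset.filter (fun e => v ∈ e ∧ ∀ z ∈ e, z ∈ S))
      = ES.filter (fun e => v ∈ e) := by
    intro v
    rw [hES, Finset.filter_filter]
    apply Finset.filter_congr
    intro e _
    exact ⟨fun ⟨h1, h2⟩ => ⟨h2, h1⟩, fun ⟨h1, h2⟩ => ⟨h2, h1⟩⟩
  have h1 : c * S.card ≤ ∑ v ∈ S, (ES.filter (fun e => v ∈ e)).card := by
    rw [mul_comm, ← smul_eq_mul, ← Finset.sum_const]
    apply Finset.sum_le_sum
    intro v hv
    rw [← key v]; exact h v hv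
  have h2 : ∑ v ∈ S, (ES.filter (fun e => v ∈ e)).card
      = ∑ e ∈ ES, (S.filter (fun v => v ∈ e)).card := by
    simp_rw [Finset.card_filter]
    rw [Finset.sum_comm]
  have h3 : ∑ e ∈ ES, (S.filter (fun v => v ∈ e)).card = 2 * ES.card := by
    rw [Finset.sum_congr rfl (fun e he => ?_), Finset.sum_const, smul_eq_mul, mul_comm]
    rw [hES, Finset.mem_filter] at he
    exact filter_mem_sym2_card (SimpleGraph.not_isDiag_of_mem_edgeFinset he.1) _ he.2
  calc c * S.card ≤ _ := h1
    _ = _ := h2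
    _ = 2 * ES.card := h3
    _ = 2 * edgesIn G S := rfl

/-- one-sided count -/
lemma onesided_lower (G : SimpleGraph V) (S T : Finset V) (c : ℕ)
    (h : ∀ w ∈ T, c ≤ (G.edgeFinset.filter
      (fun e => w ∈ e ∧ (∀ z ∈ e, z ∈ S) ∧ (∀ z ∈ e, z ∈ T → z = w))).card) :
    c * T.card ≤ edgesIn G S := by
  set B := fun w => G.edgeFinset.filter
      (fun e => w ∈ e ∧ (∀ z ∈ e, z ∈ S) ∧ (∀ z ∈ e, z ∈ T → z = w)) with hB
  have hdisj : ∀ w ∈ T, ∀ w' ∈ T, w ≠ w' → Disjoint (B w) (B w') := by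
    intro w hw w' hw' hne
    rw [Finset.disjoint_left]
    intro e he he'
    rw [hB, Finset.mem_filter] at he he'
    exact hne (he'.2.2.2 w he.2.1 hw)
  have hsub : T.biUnion B ⊆ G.edgeFinset.filter (fun e => ∀ v ∈ e, v ∈ S) := by
    intro e he
    rw [Finset.mem_biUnion] at he
    obtain ⟨w, _, he⟩ := he
    rw [hB, Finset.mem_filter] at he
    exact Finset.mem_filter.2 ⟨he.1, he.2.2.1⟩
  calc c * T.card = ∑ _w ∈ T, c := by rw [Finset.sum_const, smul_eq_mul, mul_comm]
    _ ≤ ∑ w ∈ T, (B w).card := Finset.sum_le_sum h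
    _ = (T.biUnion B).card := (Finset.card_biUnion hdisj).symm
    _ ≤ edgesIn G S := Finset.card_le_card hsub

lemma card_supersets (a b : V) (hab : a ≠ b) (m : ℕ) (hm : 2 ≤ m) :
    (((Finset.univ : Finset V).powersetCard m).filter (fun S => a ∈ S ∧ b ∈ S)).card
      = (Fintype.card V - 2).choose (m - 2) := by
  have hcard : (Finset.univ \ ({a, b} : Finset V)).card = Fintype.card V - 2 := by
    rw [Finset.card_sdiff_of_subset (Finset.subset_univ _), Finset.card_pair hab, Finset.card_univ]
  rw [← hcard, ← Finset.card_powersetCard]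
  refine Finset.card_nbij' (fun S => S \ {a, b}) (fun T => T ∪ {a, b}) ?_ ?_ ?_ ?_
  · intro S hS
    simp only [Finset.mem_coe, Finset.mem_filter, Finset.mem_powersetCard] at hS
    obtain ⟨⟨_, hScard⟩, ha, hb⟩ := hS
    rw [Finset.mem_coe, Finset.mem_powersetCard]
    constructor
    · exact Finset.sdiff_subset_sdiff (Finset.subset_univ _) le_rfl
    · rw [Finset.card_sdiff_of_subset (by
        intro z hz
        simp only [Finset.mem_insert, Finset.mem_singleton] at hz
        rcases hz with rfl | rfl <;> assumption),
        Finset.card_pair hab, hScard]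
  · intro T hT
    rw [Finset.mem_coe, Finset.mem_powersetCard] at hT
    obtain ⟨hTsub, hTcard⟩ := hT
    have hdT : Disjoint T ({a, b} : Finset V) := by
      rw [Finset.disjoint_right]
      intro z hz hzT
      have := hTsub hzT
      simp only [Finset.mem_sdiff] at this
      exact this.2 hz
    simp only [Finset.mem_coe, Finset.mem_filter, Finset.mem_powersetCard]
    refine ⟨⟨Finset.subset_univ _, ?_⟩, ?_, ?_⟩
    · rw [Finset.card_union_of_disjoint hdT, hTcard, Finset.card_pair hab]
      omega
    · exact Finset.mem_union_right _ (by simp)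
    · exact Finset.mem_union_right _ (by simp)
  · intro S hS
    simp only [Finset.mem_coe, Finset.mem_filter, Finset.mem_powersetCard] at hS
    apply Finset.sdiff_union_of_subset
    intro z hz
    simp only [Finset.mem_insert, Finset.mem_singleton] at hz
    rcases hz with rfl | rfl
    · exact hS.2.1
    · exact hS.2.2
  · intro T hT
    rw [Finset.mem_coe, Finset.mem_powersetCard] at hT
    show (T ∪ {a, b}) \ {a, b} = T
    rw [Finset.union_sdiff_right]
    apply Finset.sdiff_eq_self_of_disjoint
    rw [Finset.disjoint_right]
    intro z hz hzT
    have := hT.1 hzT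
    simp only [Finset.mem_sdiff] at this
    exact this.2 hz

lemma sum_edgesIn_powersetCard (G : SimpleGraph V) (m : ℕ) (hm : 2 ≤ m) :
    ∑ S ∈ (Finset.univ : Finset V).powersetCard m, edgesIn G S
      = G.edgeFinset.card * (Fintype.card V - 2).choose (m - 2) := by
  have h1 : ∑ S ∈ (Finset.univ : Finset V).powersetCard m, edgesIn G S
      = ∑ e ∈ G.edgeFinset,
          (((Finset.univ : Finset V).powersetCard m).filter (fun S => ∀ v ∈ e, v ∈ S)).card := by
    unfold edgesIn
    simp_rw [Finset.card_filter]
    rw [Finset.sum_comm]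
  have hcount : ∀ e ∈ G.edgeFinset,
      (((Finset.univ : Finset V).powersetCard m).filter (fun S => ∀ v ∈ e, v ∈ S)).card
        = (Fintype.card V - 2).choose (m - 2) := by
    intro e he
    have hd := SimpleGraph.not_isDiag_of_mem_edgeFinset he
    induction e with
    | _ a b =>
      have hab : a ≠ b := by simpa using hd
      have heq : (((Finset.univ : Finset V).powersetCard m).filter
          (fun S => ∀ v ∈ s(a, b), v ∈ S))
          = (((Finset.univ : Finset V).powersetCard m).filter (fun S => a ∈ S ∧ b ∈ S)) := by
        apply Finset.filter_congr
        intro S _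
        constructor
        · intro h; exact ⟨h a (by simp), h b (by simp)⟩
        · intro h v hv
          rw [Sym2.mem_iff] at hv
          rcases hv with rfl | rfl
          · exact h.1
          · exact h.2
      rw [heq, card_supersets a b hab m hm]
  rw [h1, Finset.sum_congr rfl hcount, Finset.sum_const, smul_eq_mul]

lemma choose_ratio (n m : ℕ) (hm : 2 ≤ m) (hn : m ≤ n) :
    n.choose m * (m * (m - 1)) = n * (n - 1) * (n - 2).choose (m - 2) := by
  have key : ∀ N M : ℕ, 1 ≤ M → M ≤ N → M * N.choose M = N * (N - 1).choose (M - 1) := by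
    intro N M h1 h2
    obtain ⟨N', rfl⟩ : ∃ N', N = N' + 1 := ⟨N - 1, by omega⟩
    obtain ⟨M', rfl⟩ : ∃ M', M = M' + 1 := ⟨M - 1, by omega⟩
    simp only [Nat.add_sub_cancel]
    have := Nat.add_one_mul_choose_eq N' M'
    rw [this]
    ring
  have h1 : m * n.choose m = n * (n - 1).choose (m - 1) := key n m (by omega) hn
  have h2 : (m - 1) * (n - 1).choose (m - 1) = (n - 1) * (n - 2).choose (m - 2) := by
    have := key (n - 1) (m - 1) (by omega) (by omega)
    have e1 : n - 1 - 1 = n - 2 := by omega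
    have e2 : m - 1 - 1 = m - 2 := by omega
    rwa [e1, e2] at this
  calc n.choose m * (m * (m - 1)) = (m * n.choose m) * (m - 1) := by ring
    _ = n * (n - 1).choose (m - 1) * (m - 1) := by rw [h1]
    _ = n * ((m - 1) * (n - 1).choose (m - 1)) := by ring
    _ = n * ((n - 1) * (n - 2).choose (m - 2)) := by rw [h2]
    _ = n * (n - 1) * (n - 2).choose (m - 2) := by ring

/-- global edge bound from local sparsity -/
lemma global_edge_bound (G : SimpleGraph V) (m : ℕ) (hm : 2 ≤ m)
    (hmn : m ≤ Fintype.card V)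
    (hS : ∀ S : Finset V, S.card = m → (edgesIn G S : ℝ) ≤ 13 / 12 * S.card) :
    (G.edgeFinset.card : ℝ) * ((m : ℝ) - 1)
      ≤ 13 / 12 * (Fintype.card V : ℝ) * ((Fintype.card V : ℝ) - 1) := by
  set n := Fintype.card V with hn
  have hchoosepos : 0 < ((n - 2).choose (m - 2)) := Nat.choose_pos (by omega)
  have hA : (G.edgeFinset.card : ℝ) * (((n - 2).choose (m - 2) : ℕ) : ℝ)
      ≤ 13 / 12 * m * ((n.choose m : ℕ) : ℝ) := by
    have hsum : ∑ S ∈ (Finset.univ : Finset V).powersetCard m, (edgesIn G S : ℝ)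
        ≤ 13 / 12 * m * ((n.choose m : ℕ) : ℝ) := by
      have hcardps : ((Finset.univ : Finset V).powersetCard m).card = n.choose m := by
        rw [Finset.card_powersetCard, Finset.card_univ]
      calc ∑ S ∈ (Finset.univ : Finset V).powersetCard m, (edgesIn G S : ℝ)
          ≤ ∑ _S ∈ (Finset.univ : Finset V).powersetCard m, 13 / 12 * (m : ℝ) := by
            apply Finset.sum_le_sum
            intro S hSm
            rw [Finset.mem_powersetCard] at hSm
            have := hS S hSm.2
            rw [hSm.2] at this
            exact this
        _ = 13 / 12 * m * ((n.choose m : ℕ) : ℝ) := by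
            rw [Finset.sum_const, hcardps, nsmul_eq_mul]; ring
    have hkey := sum_edgesIn_powersetCard G m hm
    rw [← hn] at hkey
    calc (G.edgeFinset.card : ℝ) * (((n - 2).choose (m - 2) : ℕ) : ℝ)
        = ((G.edgeFinset.card * (n - 2).choose (m - 2) : ℕ) : ℝ) := by push_cast; ring
      _ = ∑ S ∈ (Finset.univ : Finset V).powersetCard m, (edgesIn G S : ℝ) := by
          rw [← hkey]; push_cast; rfl
      _ ≤ _ := hsum
  have hB : ((n.choose m : ℕ) : ℝ) * ((m : ℝ) * ((m : ℝ) - 1))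
      = (n : ℝ) * ((n : ℝ) - 1) * (((n - 2).choose (m - 2) : ℕ) : ℝ) := by
    have hrat := choose_ratio n m hm hmn
    have hcast := congrArg (fun t : ℕ => (t : ℝ)) hrat
    push_cast [Nat.cast_sub (by omega : 1 ≤ m), Nat.cast_sub (by omega : 1 ≤ n)] at hcast
    linarith [hcast]
  have hm1pos : (0 : ℝ) < (m : ℝ) - 1 := by
    have : (2 : ℝ) ≤ m := by exact_mod_cast hm
    linarith
  have hc2pos : (0 : ℝ) < (((n - 2).choose (m - 2) : ℕ) : ℝ) := by exact_mod_cast hchoosepos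
  have hmpos : (0 : ℝ) < m := by linarith
  have step : (G.edgeFinset.card : ℝ) * ((m : ℝ) - 1) * ((((n - 2).choose (m - 2) : ℕ) : ℝ) * m)
      ≤ 13 / 12 * (n : ℝ) * ((n : ℝ) - 1) * ((((n - 2).choose (m - 2) : ℕ) : ℝ) * m) := by
    calc (G.edgeFinset.card : ℝ) * ((m : ℝ) - 1) * ((((n - 2).choose (m - 2) : ℕ) : ℝ) * m)
        = ((G.edgeFinset.card : ℝ) * (((n - 2).choose (m - 2) : ℕ) : ℝ)) *
            ((m : ℝ) * ((m:ℝ) - 1)) := by ring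
      _ ≤ (13 / 12 * m * ((n.choose m : ℕ) : ℝ)) * ((m : ℝ) * ((m:ℝ) - 1)) := by
          apply mul_le_mul_of_nonneg_right hA
          positivity
      _ = 13 / 12 * (m:ℝ) * (((n.choose m : ℕ) : ℝ) * ((m:ℝ) * ((m:ℝ) - 1))) := by ring
      _ = 13 / 12 * (m:ℝ) * ((n : ℝ) * ((n : ℝ) - 1) * (((n - 2).choose (m - 2) : ℕ) : ℝ)) := by
          rw [hB]
      _ = 13 / 12 * (n : ℝ) * ((n : ℝ) - 1) * ((((n - 2).choose (m - 2) : ℕ) : ℝ) * m) := by ring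
  exact le_of_mul_le_mul_right step (by positivity)

end Aux2

section Aux3
variable {V : Type*} [Fintype V]

lemma maxKMatch_lt (H : SimpleGraph V) (k : ℕ) (hlam : 0 < lamK H k) :
    maxKMatch H k + 1 ≤ k * Fintype.card V / 2 := by
  unfold lamK at hlam; omega

lemma two_card_le {H : SimpleGraph V} {k : ℕ} {F : Finset (Sym2 V)}
    (hF : IsMaxM H k F) (hlam : 0 < lamK H k) :
    2 * F.card + 2 ≤ k * Fintype.card V := by
  have h1 := maxKMatch_lt H k hlam
  have h2 := Nat.div_mul_le_self (k * Fintype.card V) 2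
  have h3 : F.card = maxKMatch H k := hF.2
  omega

lemma exists_deficient (H : SimpleGraph V) (k : ℕ) (hlam : 0 < lamK H k) :
    ∃ F, IsMaxM H k F ∧ ∃ x, edgeDeg F x < k := by
  obtain ⟨F, hkm, hcard⟩ := exists_maxKMatch H k
  have hFm : IsMaxM H k F := ⟨hkm, hcard⟩
  refine ⟨F, hFm, ?_⟩
  by_contra h
  push_neg at h
  have hsum := sum_edgeDeg F hkm.1
  have hge : Fintype.card V * k ≤ ∑ v : V, edgeDeg F v := by
    calc Fintype.card V * k = ∑ _v : V, k := by
          rw [Finset.sum_const, smul_eq_mul, Finset.card_univ]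
      _ ≤ _ := Finset.sum_le_sum (fun v _ => h v)
  have hc := two_card_le hFm hlam
  have hcomm : Fintype.card V * k = k * Fintype.card V := Nat.mul_comm _ _
  omega

lemma PP_nonempty {H : SimpleGraph V} {k : ℕ} (hlam : 0 < lamK H k) {x : V}
    (hx : ∃ F, IsMaxM H k F ∧ edgeDeg F x < k) : ∃ u, PP H k x u := by
  obtain ⟨F, hFm, hFx⟩ := hx
  by_cases h2 : edgeDeg F x + 1 < k
  · exact ⟨x, F, hFm, hFx, hFx, fun _ => h2⟩
  · by_contra h
    push_neg at h
    have hall : ∀ u, u ≠ x → k ≤ edgeDeg F u := by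
      intro u hux
      by_contra hu
      push_neg at hu
      exact h u ⟨F, hFm, hFx, hu, fun hh => absurd hh hux⟩
    have hsum := sum_edgeDeg F hFm.1.1
    have hcard := two_card_le hFm hlam
    have hbig : ∑ v : V, edgeDeg F v
        = edgeDeg F x + ∑ v ∈ Finset.univ.erase x, edgeDeg F v :=
      (Finset.add_sum_erase _ _ (Finset.mem_univ x)).symm
    have h6 : (Finset.univ.erase x).card * k ≤ ∑ v ∈ Finset.univ.erase x, edgeDeg F v := by
      calc (Finset.univ.erase x).card * k = ∑ _v ∈ Finset.univ.erase x, k := by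
            rw [Finset.sum_const, smul_eq_mul]
        _ ≤ _ := Finset.sum_le_sum (fun v hv => hall v (Finset.ne_of_mem_erase hv))
    have h7 : (Finset.univ.erase x).card = Fintype.card V - 1 := by
      rw [Finset.card_erase_of_mem (Finset.mem_univ x), Finset.card_univ]
    have h9 : 1 ≤ Fintype.card V := Fintype.card_pos_iff.2 ⟨x⟩
    have h10 : (Fintype.card V - 1) * k = Fintype.card V * k - k := by
      rw [Nat.sub_mul, Nat.one_mul]
    have hcomm : Fintype.card V * k = k * Fintype.card V := Nat.mul_comm _ _
    rw [h7] at h6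
    have h8 : k ≤ edgeDeg F x + 1 := Nat.not_lt.1 h2
    omega

/-- The main density lemma: if `x` is deficient in some maximum `k`-matching, then the
set of vertices `u` with `PP H k x u` occupies at least a `23/36` fraction of `m`. -/
lemma density_lemma (H : SimpleGraph V) (k : ℕ) (hk : 2 ≤ k)
    (hdeg : ∀ v : V, k + 2 ≤ H.degree v)
    (γ : ℝ) (hγ0 : 0 < γ)
    (hsparse : ∀ S : Finset V, (S.card : ℝ) ≤ γ * Fintype.card V →
        (edgesIn H S : ℝ) ≤ 13 / 12 * S.card)
    (m : ℕ) (hm : (m : ℝ) ≤ γ * Fintype.card V)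
    (hlam : 0 < lamK H k)
    (x : V) (hx : ∃ F, IsMaxM H k F ∧ edgeDeg F x < k) :
    23 * m ≤ 36 * (Finset.univ.filter (fun u => PP H k x u)).card := by
  classical
  obtain ⟨u₀, hu₀⟩ := PP_nonempty hlam hx
  set D := Finset.univ.filter (fun u => PP H k x u) with hD
  have hu₀D : u₀ ∈ D := Finset.mem_filter.2 ⟨Finset.mem_univ _, hu₀⟩
  set Fw : V → Finset (Sym2 V) := fun u => if h : PP H k x u then Classical.choose h else ∅
    with hFwdef
  have hFwspec : ∀ u, (h : PP H k x u) → IsMaxM H k (Fw u) ∧ edgeDeg (Fw u) x < k ∧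
      edgeDeg (Fw u) u < k ∧ (u = x → edgeDeg (Fw u) x + 1 < k) := by
    intro u h
    simp only [hFwdef, dif_pos h]
    exact Classical.choose_spec h
  set W := Finset.univ.filter
      (fun w => w ∉ D ∧ ∃ u, PP H k x u ∧ H.Adj u w ∧ s(u, w) ∉ Fw u) with hW
  have hDW : Disjoint D W := by
    rw [Finset.disjoint_left]
    intro a haD haW
    exact ((Finset.mem_filter.1 haW).2.1) haD
  -- w-side: every vertex of W has k+1 edges into D
  have hWside : ∀ w ∈ W, ∀ (X T : Finset V), (∀ z ∈ D, z ∈ X) → w ∈ X →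
      (∀ z ∈ T, z ∉ D) →
      k + 1 ≤ (H.edgeFinset.filter
        (fun e => w ∈ e ∧ (∀ z ∈ e, z ∈ X) ∧ (∀ z ∈ e, z ∈ T → z = w))).card := by
    intro w hw X T hDX hwX hTD
    rw [hW, Finset.mem_filter] at hw
    obtain ⟨-, hwD, u, hu, huw, hnF⟩ := hw
    obtain ⟨hFm, hFx, hFu, hFux⟩ := hFwspec u hu
    obtain ⟨hwdeg, hpart⟩ := swap_step hFm hFx hFu hFux huw hnF
    have huD : u ∈ D := Finset.mem_filter.2 ⟨Finset.mem_univ _, hu⟩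
    set C := insert (s(u, w)) ((Fw u).filter (fun e => w ∈ e)) with hC
    have hCcard : C.card = k + 1 := by
      rw [hC, Finset.card_insert_of_notMem
        (fun hmem => hnF (Finset.mem_of_mem_filter _ hmem))]
      have hh : ((Fw u).filter (fun e => w ∈ e)).card = edgeDeg (Fw u) w := rfl
      rw [hh, hwdeg]
    have hCsub : C ⊆ H.edgeFinset.filter
        (fun e => w ∈ e ∧ (∀ z ∈ e, z ∈ X) ∧ (∀ z ∈ e, z ∈ T → z = w)) := by
      intro e he
      rw [hC, Finset.mem_insert] at he
      rcases he with rfl | he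
      · refine Finset.mem_filter.2 ⟨?_, ?_, ?_, ?_⟩
        · rw [SimpleGraph.mem_edgeFinset, SimpleGraph.mem_edgeSet]; exact huw
        · exact Sym2.mem_mk_right u w
        · intro z hz
          rw [Sym2.mem_iff] at hz
          rcases hz with rfl | rfl
          · exact hDX z huD
          · exact hwX
        · intro z hz hzT
          rw [Sym2.mem_iff] at hz
          rcases hz with rfl | rfl
          · exact absurd huD (hTD z hzT)
          · rfl
      · rw [Finset.mem_filter] at he
        obtain ⟨heF, hew⟩ := he
        have heE : e ∈ H.edgeFinset := hFm.1.1 heF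
        obtain ⟨v, hev, hadj⟩ := edge_mem_repr heE hew
        have hvPP : PP H k x v := hpart e heF hew v hev
        have hvD : v ∈ D := Finset.mem_filter.2 ⟨Finset.mem_univ _, hvPP⟩
        refine Finset.mem_filter.2 ⟨heE, hew, ?_, ?_⟩
        · intro z hz
          rw [hev, Sym2.mem_iff] at hz
          rcases hz with rfl | rfl
          · exact hwX
          · exact hDX z hvD
        · intro z hz hzT
          rw [hev, Sym2.mem_iff] at hz
          rcases hz with rfl | rfl
          · rfl
          · exact absurd hvD (hTD z hzT)
    calc k + 1 = C.card := hCcard.symm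
      _ ≤ _ := Finset.card_le_card hCsub
  -- u-side: every vertex of D has ≥ 3 edges inside D ∪ W
  have hDside : ∀ u ∈ D,
      3 ≤ (H.edgeFinset.filter (fun e => u ∈ e ∧ ∀ z ∈ e, z ∈ D ∪ W)).card := by
    intro u hu'
    have hu : PP H k x u := (Finset.mem_filter.1 hu').2
    obtain ⟨hFm, hFx, hFu, -⟩ := hFwspec u hu
    set A := (H.edgeFinset.filter (fun e => u ∈ e)) \ (Fw u) with hA
    have hAcard : 3 ≤ A.card := by
      have h1 : (H.edgeFinset.filter (fun e => u ∈ e)).card = H.degree u := by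
        rw [← SimpleGraph.incidenceFinset_eq_filter, SimpleGraph.card_incidenceFinset_eq_degree]
      have h2 : (H.edgeFinset.filter (fun e => u ∈ e)) ∩ (Fw u)
          ⊆ (Fw u).filter (fun e => u ∈ e) := by
        intro e he
        rw [Finset.mem_inter, Finset.mem_filter] at he
        exact Finset.mem_filter.2 ⟨he.2, he.1.2⟩
      have h3 := Finset.card_sdiff_add_card_inter
        (H.edgeFinset.filter (fun e => u ∈ e)) (Fw u)
      have h4 : ((H.edgeFinset.filter (fun e => u ∈ e)) ∩ (Fw u)).card
          ≤ edgeDeg (Fw u) u := Finset.card_le_card h2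
      have h5 := hdeg u
      rw [hA]
      omega
    refine le_trans hAcard (Finset.card_le_card ?_)
    intro e he
    rw [hA, Finset.mem_sdiff, Finset.mem_filter] at he
    obtain ⟨⟨heE, heu⟩, henF⟩ := he
    refine Finset.mem_filter.2 ⟨heE, heu, ?_⟩
    intro z hz
    obtain ⟨v, hev, hadj⟩ := edge_mem_repr heE heu
    by_cases hzu : z = u
    · subst hzu; exact Finset.mem_union_left _ hu'
    · have hzv : z = v := by
        rw [hev, Sym2.mem_iff] at hz
        tauto
      subst hzv
      by_cases hzD : z ∈ D
      · exact Finset.mem_union_left _ hzD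
      · refine Finset.mem_union_right _ ?_
        rw [hW, Finset.mem_filter]
        refine ⟨Finset.mem_univ _, hzD, u, hu, hadj, ?_⟩
        rw [← hev]
        exact henF
  -- case analysis
  set S := D ∪ W with hS
  have hScard : S.card = D.card + W.card := Finset.card_union_of_disjoint hDW
  by_contra hcon
  push_neg at hcon
  -- S must be large
  have hSbig : ¬ ((S.card : ℝ) ≤ γ * Fintype.card V) := by
    intro hle
    have hvert : ∀ v ∈ S, 3 ≤ (H.edgeFinset.filter
        (fun e => v ∈ e ∧ ∀ z ∈ e, z ∈ S)).card := by
      intro v hv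
      rcases Finset.mem_union.1 hv with hvD | hvW
      · exact hDside v hvD
      · have := hWside v hvW S ∅ (fun z hz => Finset.mem_union_left _ hz) hv
          (fun z hz => absurd hz (Finset.notMem_empty z))
        have hsub : (H.edgeFinset.filter
            (fun e => v ∈ e ∧ (∀ z ∈ e, z ∈ S) ∧ (∀ z ∈ e, z ∈ (∅ : Finset V) → z = v)))
            ⊆ (H.edgeFinset.filter (fun e => v ∈ e ∧ ∀ z ∈ e, z ∈ S)) := by
          intro e he
          rw [Finset.mem_filter] at he ⊢
          exact ⟨he.1, he.2.1, he.2.2.1⟩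
        have hcard := Finset.card_le_card hsub
        omega
    have h1 := handshake_lower H S 3 hvert
    have h2 := hsparse S hle
    have h3 : (3 : ℝ) * S.card ≤ 2 * (13 / 12 * S.card) := by
      calc (3 : ℝ) * S.card = ((3 * S.card : ℕ) : ℝ) := by push_cast; ring
        _ ≤ ((2 * edgesIn H S : ℕ) : ℝ) := by exact_mod_cast h1
        _ = 2 * (edgesIn H S : ℝ) := by push_cast; ring
        _ ≤ 2 * (13 / 12 * S.card) := by linarith
    have h4 : 1 ≤ S.card := Finset.card_pos.2 ⟨u₀, Finset.mem_union_left _ hu₀D⟩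
    have h5 : (1 : ℝ) ≤ (S.card : ℝ) := by exact_mod_cast h4
    linarith
  have hmS : m + 1 ≤ S.card := by
    by_contra hc
    push_neg at hc
    apply hSbig
    calc (S.card : ℝ) ≤ m := by exact_mod_cast Nat.lt_succ_iff.1 hc
      _ ≤ γ * Fintype.card V := hm
  have hDm : D.card < m := by omega
  have hWge : m - D.card ≤ W.card := by omega
  obtain ⟨W', hW'sub, hW'card⟩ := Finset.exists_subset_card_eq hWge
  set S' := D ∪ W' with hS'
  have hDW' : Disjoint D W' := hDW.mono_right hW'sub
  have hS'card : S'.card = m := by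
    rw [hS', Finset.card_union_of_disjoint hDW', hW'card]
    omega
  have hsp : (edgesIn H S' : ℝ) ≤ 13 / 12 * S'.card := by
    apply hsparse
    rw [hS'card]
    exact hm
  have hone : (k + 1) * W'.card ≤ edgesIn H S' := by
    apply onesided_lower
    intro w hw
    exact hWside w (hW'sub hw) S' W' (fun z hz => Finset.mem_union_left _ hz)
      (Finset.mem_union_right _ hw)
      (fun z hz => ((Finset.mem_filter.1 (hW'sub hz)).2.1))
  have hone3 : 3 * W'.card ≤ edgesIn H S' := by
    have : 3 * W'.card ≤ (k + 1) * W'.card := Nat.mul_le_mul_right _ (by omega)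
    omega
  -- wrap up numerically
  have hr1 : (3 : ℝ) * W'.card ≤ 13 / 12 * m := by
    calc (3 : ℝ) * W'.card = ((3 * W'.card : ℕ) : ℝ) := by push_cast; ring
      _ ≤ (edgesIn H S' : ℝ) := by exact_mod_cast hone3
      _ ≤ 13 / 12 * S'.card := hsp
      _ = 13 / 12 * m := by rw [hS'card]
  have hr2 : (W'.card : ℝ) = (m : ℝ) - D.card := by
    rw [hW'card]
    push_cast [Nat.cast_sub hDm.le]
    ring
  have hr3 : (36 : ℝ) * D.card < 23 * m := by exact_mod_cast hcon
  rw [hr2] at hr1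
  linarith

end Aux3

lemma isKMatching_insert_of_le {V : Type*} [Fintype V] {G G' : SimpleGraph V}
    (hle : G ≤ G') {k : ℕ} {F : Finset (Sym2 V)} (hF : IsKMatching G k F) {x y : V}
    (hadj : G'.Adj x y) (hx : edgeDeg F x < k) (hy : edgeDeg F y < k)
    (hnot : s(x, y) ∉ F) : IsKMatching G' k (insert s(x, y) F) := by
  constructor
  · intro e he
    rcases Finset.mem_insert.1 he with rfl | h
    · exact SimpleGraph.mem_edgeFinset.2 ((G'.mem_edgeSet).2 hadj)
    · exact SimpleGraph.mem_edgeFinset.2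
        (SimpleGraph.edgeSet_mono hle (SimpleGraph.mem_edgeFinset.1 (hF.1 h)))
  · intro v
    rw [edgeDeg_insert _ _ hnot]
    by_cases hv : v ∈ s(x, y)
    · rw [if_pos hv]
      rw [Sym2.mem_iff] at hv
      have := hF.2 v
      rcases hv with rfl | rfl <;> omega
    · rw [if_neg hv]
      have := hF.2 v
      omega

section Aux4
variable {V : Type*} [Fintype V]

lemma good_edge {H : SimpleGraph V} {k : ℕ} (hlam : 0 < lamK H k) {x y : V}
    (hxy : x ≠ y) (hne : s(x, y) ∉ H.edgeFinset) (hPP : PP H k x y) :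
    lamK (H ⊔ SimpleGraph.fromEdgeSet {s(x, y)}) k < lamK H k := by
  obtain ⟨F, hFm, hFx, hFy, -⟩ := hPP
  have heF : s(x, y) ∉ F := fun h => hne (hFm.1.1 h)
  set H' := H ⊔ SimpleGraph.fromEdgeSet {s(x, y)} with hH'
  have hadj : H'.Adj x y := by
    rw [hH', SimpleGraph.sup_adj, SimpleGraph.fromEdgeSet_adj]
    exact Or.inr ⟨rfl, hxy⟩
  have hkm' : IsKMatching H' k (insert s(x, y) F) := by
    apply isKMatching_insert_of_le le_sup_left hFm.1 hadj hFx hFy heF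
  have hbig : maxKMatch H k + 1 ≤ maxKMatch H' k := by
    have h1 := card_le_maxKMatch hkm'
    rwa [Finset.card_insert_of_notMem heF, hFm.2] at h1
  have h2 := maxKMatch_lt H k hlam
  have hcards : Fintype.card V = Fintype.card V := rfl
  unfold lamK at hlam ⊢
  omega

lemma sum_card_le_two_mul (X : Finset V) (Zf : V → Finset V) (good : Finset (Sym2 V))
    (hd : ∀ e ∈ good, ¬ e.IsDiag)
    (hsub : ∀ x ∈ X, ∀ y ∈ Zf x, s(x, y) ∈ good) :
    ∑ x ∈ X, (Zf x).card ≤ 2 * good.card := by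
  classical
  set Ex : V → Finset (Sym2 V) := fun x => (Zf x).image (fun y => s(x, y)) with hEx
  have hcardEx : ∀ x, (Ex x).card = (Zf x).card := by
    intro x
    rw [hEx]
    apply Finset.card_image_of_injOn
    intro y _ y' _ hyy
    exact Sym2.congr_right.1 hyy
  have hExsub : ∀ x ∈ X, Ex x ⊆ good := by
    intro x hx e he
    rw [hEx] at he
    obtain ⟨y, hy, rfl⟩ := Finset.mem_image.1 he
    exact hsub x hx y hy
  have h1 : ∀ x ∈ X, (Zf x).card = (good.filter (fun e => e ∈ Ex x)).card := by
    intro x hx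
    rw [Finset.filter_mem_eq_inter, Finset.inter_eq_right.2 (hExsub x hx), hcardEx]
  calc ∑ x ∈ X, (Zf x).card
      = ∑ x ∈ X, (good.filter (fun e => e ∈ Ex x)).card := Finset.sum_congr rfl h1
    _ = ∑ e ∈ good, (X.filter (fun x => e ∈ Ex x)).card := by
        simp_rw [Finset.card_filter]
        rw [Finset.sum_comm]
    _ ≤ ∑ e ∈ good, 2 := by
        apply Finset.sum_le_sum
        intro e he
        have hsub2 : X.filter (fun x => e ∈ Ex x) ⊆ Finset.univ.filter (fun z => z ∈ e) := by
          intro x hxf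
          rw [Finset.mem_filter] at hxf
          obtain ⟨-, hmem⟩ := hxf
          rw [hEx] at hmem
          obtain ⟨y, -, rfl⟩ := Finset.mem_image.1 hmem
          exact Finset.mem_filter.2 ⟨Finset.mem_univ _, Sym2.mem_mk_left x y⟩
        calc (X.filter (fun x => e ∈ Ex x)).card
            ≤ (Finset.univ.filter (fun z => z ∈ e)).card := Finset.card_le_card hsub2
          _ = 2 := filter_mem_sym2_card (hd e he) _ (fun v _ => Finset.mem_univ v)
    _ = 2 * good.card := by rw [Finset.sum_const, smul_eq_mul, mul_comm]

end Aux4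

theorem stmt7 (k : ℕ) (hk : 2 ≤ k) (γ : ℝ) (hγ0 : 0 < γ) (hγ2 : γ < 1 / 2) :
    ∃ N : ℕ, ∀ (V : Type) (_ : Fintype V) (_ : DecidableEq V) (H : SimpleGraph V),
      N ≤ Fintype.card V →
      (∀ v : V, k + 2 ≤ H.degree v) →
      (∀ S : Finset V, (S.card : ℝ) ≤ γ * Fintype.card V →
        (edgesIn H S : ℝ) ≤ 13 / 12 * S.card) →
      0 < lamK H k →
      γ ^ 2 / (2 * ((k : ℝ) + 2) ^ 2) * (Fintype.card V : ℝ) ^ 2 ≤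
        (((Finset.univ : Finset (Sym2 V)).filter (fun e => ¬ e.IsDiag ∧ e ∉ H.edgeFinset ∧
            lamK (H ⊔ SimpleGraph.fromEdgeSet {e}) k < lamK H k)).card : ℝ) := by
  classical
  refine ⟨⌈(1000000 : ℝ) / γ ^ 3⌉₊, ?_⟩
  intro V instF instD H hN hdeg hsparse hlam
  set n := Fintype.card V with hn
  have hnR : ((1000000 : ℝ) / γ ^ 3) ≤ (n : ℝ) := by
    calc ((1000000 : ℝ) / γ ^ 3) ≤ (⌈(1000000 : ℝ) / γ ^ 3⌉₊ : ℝ) := Nat.le_ceil _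
      _ ≤ (n : ℝ) := by exact_mod_cast hN
  have hγ1 : γ ≤ 1 / 2 := le_of_lt hγ2
  set g : ℝ := γ * n with hg
  have hgn : (1000000 : ℝ) ≤ γ ^ 3 * n := by
    have h3 : (0 : ℝ) < γ ^ 3 := by positivity
    calc (1000000 : ℝ) = (1000000 / γ ^ 3) * γ ^ 3 := by field_simp
      _ ≤ (n : ℝ) * γ ^ 3 := by
          apply mul_le_mul_of_nonneg_right hnR (le_of_lt h3)
      _ = γ ^ 3 * n := by ring
  have hgbig : (4000000 : ℝ) ≤ g := by
    have h1 : γ ^ 3 * n = γ ^ 2 * g := by rw [hg]; ring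
    have h2 : γ ^ 2 ≤ (1/2) ^ 2 := by nlinarith
    nlinarith [hgn, sq_nonneg γ]
  have hnpos : (0 : ℝ) < n := by nlinarith
  have hgpos : (0 : ℝ) < g := by positivity
  -- the floor
  set m := ⌊g⌋₊ with hmdef
  have hm : (m : ℝ) ≤ γ * n := Nat.floor_le (le_of_lt hgpos)
  have hmlb : g - 1 ≤ (m : ℝ) := by
    have := Nat.lt_floor_add_one g
    linarith
  have hm2 : 2 ≤ m := by
    have : (2 : ℝ) ≤ g := by linarith
    exact Nat.le_floor (by exact_mod_cast this)
  have hmn : m ≤ n := by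
    have h1 : (m : ℝ) < n := by
      calc (m : ℝ) ≤ γ * n := hm
        _ < (1/2) * n := by nlinarith
        _ ≤ n := by linarith
    exact_mod_cast le_of_lt h1
  -- the deficient vertex
  obtain ⟨F₀, hF₀m, x₀, hx₀⟩ := exists_deficient H k hlam
  set X := Finset.univ.filter (fun u => PP H k x₀ u) with hX
  have hXcard : 23 * m ≤ 36 * X.card :=
    density_lemma H k hk hdeg γ hγ0 hsparse m hm hlam x₀ ⟨F₀, hF₀m, hx₀⟩
  -- the good set
  set good := (Finset.univ : Finset (Sym2 V)).filter (fun e => ¬ e.IsDiag ∧ e ∉ H.edgeFinset ∧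
      lamK (H ⊔ SimpleGraph.fromEdgeSet {e}) k < lamK H k) with hgood
  set Zf : V → Finset V := fun x =>
    (Finset.univ.filter (fun u => PP H k x u)) \ (insert x (H.neighborFinset x)) with hZf
  -- each Zf x is big
  have hZbig : ∀ x ∈ X, 23 * m ≤ 36 * ((Zf x).card + 1 + H.degree x) := by
    intro x hx
    obtain ⟨F, hFm, -, hFx, -⟩ := (Finset.mem_filter.1 hx).2
    have hdens := density_lemma H k hk hdeg γ hγ0 hsparse m hm hlam x ⟨F, hFm, hFx⟩
    have hcard1 : (Finset.univ.filter (fun u => PP H k x u)).card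
        ≤ (Zf x).card + (insert x (H.neighborFinset x)).card := by
      rw [hZf]
      exact Finset.card_le_card_sdiff_add_card
    have hcard2 : (insert x (H.neighborFinset x)).card ≤ 1 + H.degree x := by
      calc (insert x (H.neighborFinset x)).card ≤ (H.neighborFinset x).card + 1 :=
            Finset.card_insert_le _ _
        _ = 1 + H.degree x := by rw [SimpleGraph.card_neighborFinset_eq_degree]; omega
    omega
  -- membership of good
  have hmem : ∀ x ∈ X, ∀ y ∈ Zf x, s(x, y) ∈ good := by
    intro x hx y hy
    rw [hZf, Finset.mem_sdiff, Finset.mem_filter, Finset.mem_insert] at hy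
    push_neg at hy
    obtain ⟨⟨-, hPPy⟩, hyx, hynb⟩ := hy
    have hxy : x ≠ y := fun h => hyx h.symm
    have hnadj : ¬ H.Adj x y := fun h => hynb ((SimpleGraph.mem_neighborFinset H x y).2 h)
    have hnE : s(x, y) ∉ H.edgeFinset := by
      rw [SimpleGraph.mem_edgeFinset, SimpleGraph.mem_edgeSet]
      exact hnadj
    rw [hgood, Finset.mem_filter]
    refine ⟨Finset.mem_univ _, ?_, hnE, good_edge hlam hxy hnE hPPy⟩
    rw [Sym2.mk_isDiag_iff]
    exact hxy
  have hcount : ∑ x ∈ X, (Zf x).card ≤ 2 * good.card := by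
    apply sum_card_le_two_mul X Zf good ?_ hmem
    intro e he
    rw [hgood, Finset.mem_filter] at he
    exact he.2.1
  -- global edge bound
  have hglobal : (H.edgeFinset.card : ℝ) * ((m : ℝ) - 1)
      ≤ 13 / 12 * (n : ℝ) * ((n : ℝ) - 1) := by
    apply global_edge_bound H m hm2 hmn
    intro S hScard
    apply hsparse
    rw [hScard]
    exact hm
  have hdegsum : ∑ x ∈ X, H.degree x ≤ 2 * H.edgeFinset.card := by
    calc ∑ x ∈ X, H.degree x ≤ ∑ x : V, H.degree x :=
          Finset.sum_le_sum_of_subset (Finset.subset_univ X)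
      _ = 2 * H.edgeFinset.card := SimpleGraph.sum_degrees_eq_twice_card_edges H
  -- pass to the reals
  set mR := (m : ℝ) with hmR
  set E := (H.edgeFinset.card : ℝ) with hE
  set DR := (X.card : ℝ) with hDR
  set G := (good.card : ℝ) with hG
  have hmRpos : (2 : ℝ) ≤ mR := by rw [hmR]; exact_mod_cast hm2
  have hDRlb : 23 / 36 * mR ≤ DR := by
    have : (23 * m : ℕ) ≤ (36 * X.card : ℕ) := hXcard
    have h := (Nat.cast_le (α := ℝ)).2 this
    push_cast at h
    linarith
  have hperx : ∀ x ∈ X, 23 / 36 * mR - 1 - (H.degree x : ℝ) ≤ ((Zf x).card : ℝ) := by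
    intro x hx
    have h := (Nat.cast_le (α := ℝ)).2 (hZbig x hx)
    push_cast at h
    linarith
  have hsum1 : DR * (23 / 36 * mR - 1) - 2 * E ≤ ∑ x ∈ X, ((Zf x).card : ℝ) := by
    have h1 : ∑ x ∈ X, (23 / 36 * mR - 1 - (H.degree x : ℝ)) ≤ ∑ x ∈ X, ((Zf x).card : ℝ) :=
      Finset.sum_le_sum hperx
    have h2 : ∑ x ∈ X, (23 / 36 * mR - 1 - (H.degree x : ℝ))
        = DR * (23 / 36 * mR - 1) - ∑ x ∈ X, (H.degree x : ℝ) := by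
      rw [Finset.sum_sub_distrib, Finset.sum_const, nsmul_eq_mul]
    have h3 : ∑ x ∈ X, (H.degree x : ℝ) ≤ 2 * E := by
      have := (Nat.cast_le (α := ℝ)).2 hdegsum
      push_cast at this
      linarith
    linarith
  have hsum2 : ∑ x ∈ X, ((Zf x).card : ℝ) ≤ 2 * G := by
    have := (Nat.cast_le (α := ℝ)).2 hcount
    push_cast at this
    linarith
  -- bound E
  have hm1 : g / 2 ≤ mR - 1 := by linarith
  have hm1pos : (0 : ℝ) < mR - 1 := by linarith
  -- bound E: E * gamma <= 13/6 n, then 10^6 E <= 13/6 g^2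
  have hEnonneg : (0 : ℝ) ≤ E := by rw [hE]; positivity
  have hE1 : E * γ ≤ 13 / 6 * (n : ℝ) := by
    have h1 : E * (g / 2) ≤ E * (mR - 1) := mul_le_mul_of_nonneg_left hm1 hEnonneg
    have h2 : E * (g / 2) ≤ 13 / 12 * (n : ℝ) * ((n : ℝ) - 1) := le_trans h1 hglobal
    have h3 : 13 / 12 * (n : ℝ) * ((n : ℝ) - 1) ≤ 13 / 12 * (n : ℝ) * (n : ℝ) := by nlinarith
    have h4 : (E * γ) * (n : ℝ) ≤ (13 / 6 * (n : ℝ)) * (n : ℝ) := by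
      have : E * (g / 2) = (E * γ) * (n : ℝ) / 2 := by rw [hg]; ring
      nlinarith
    exact le_of_mul_le_mul_right h4 hnpos
  have hE2 : 1000000 * E ≤ 13 / 6 * g ^ 2 := by
    have e1 : 1000000 * E ≤ (γ ^ 3 * (n : ℝ)) * E := mul_le_mul_of_nonneg_right hgn hEnonneg
    have e2 : (γ ^ 3 * (n : ℝ)) * E = (γ ^ 2 * (n : ℝ)) * (E * γ) := by ring
    have e3 : (γ ^ 2 * (n : ℝ)) * (E * γ) ≤ (γ ^ 2 * (n : ℝ)) * (13 / 6 * (n : ℝ)) :=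
      mul_le_mul_of_nonneg_left hE1 (by positivity)
    have e4 : (γ ^ 2 * (n : ℝ)) * (13 / 6 * (n : ℝ)) = 13 / 6 * g ^ 2 := by rw [hg]; ring
    linarith
  -- the key inequality
  set a : ℝ := 23 / 36 * mR with ha
  have hfnonneg : (0 : ℝ) ≤ a - 1 := by rw [ha]; linarith
  have hDRa : a * (a - 1) ≤ DR * (a - 1) := mul_le_mul_of_nonneg_right hDRlb hfnonneg
  have key : a * (a - 1) - 2 * E ≤ 2 * G := by
    have h1 := hsum1
    have h2 := hsum2
    linarith
  have ha6 : 3 / 5 * g ≤ a := by rw [ha]; linarith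
  have ha7 : 1 / 2 * g ≤ a - 1 := by linarith
  have hprod : (3 / 5 * g) * (1 / 2 * g) ≤ a * (a - 1) := by
    apply mul_le_mul ha6 ha7 (by positivity) (by linarith)
  have hprodval : (3 / 5 * g) * (1 / 2 * g) = 3 / 10 * g ^ 2 := by ring
  have hGbig : g ^ 2 ≤ 32 * G := by nlinarith [hE2, key, hprod, hprodval, hgpos]
  -- final comparison
  have hk2 : (4 : ℝ) ≤ (k : ℝ) + 2 := by
    have : (2 : ℝ) ≤ (k : ℝ) := by exact_mod_cast hk
    linarith
  have hk4 : (32 : ℝ) ≤ 2 * ((k : ℝ) + 2) ^ 2 := by nlinarith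
  have e0 : γ ^ 2 / (2 * ((k : ℝ) + 2) ^ 2) * (n : ℝ) ^ 2 = g ^ 2 / (2 * ((k : ℝ) + 2) ^ 2) := by
    rw [hg]; ring
  have e1 : g ^ 2 / (2 * ((k : ℝ) + 2) ^ 2) ≤ g ^ 2 / 32 := by
    apply div_le_div_of_nonneg_left (by positivity) (by norm_num) hk4
  calc γ ^ 2 / (2 * ((k : ℝ) + 2) ^ 2) * (n : ℝ) ^ 2
      = g ^ 2 / (2 * ((k : ℝ) + 2) ^ 2) := e0
    _ ≤ g ^ 2 / 32 := e1
    _ ≤ G := by linarith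
end

section
/- Let G be a graph, F a k-matching in G with λ_k(F) = λ_k(G) > 0, and y a vertex with d_F(y) < k. Let A^{↑↓} be the set of endpoints of F-alternating walks of type ↑↓ from y (including y itself via the empty walk), and A^{↑↑} the set of endpoints of F-alternating walks of type ↑↑ from y. Then every vertex of A^{↑↓} \ ({y} ∪ A^{↑↑}) is an F-neighbour of some vertex of A^{↑↑}, hence |A^{↑↓} \ A^{↑↑}| ≤ k|A^{↑↑}| + 1. -/
open Finset
open scoped Classical

/-- `e` lies in the symmetric difference of `F` with the edge list `l`
(edges counted with multiplicity). -/
def inSD {V : Type*} [DecidableEq V] (F : Finset (Sym2 V)) (l : List (Sym2 V))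
    (e : Sym2 V) : Prop :=
  Odd ((if e ∈ F then 1 else 0) + l.count e)

/-- The symmetric difference `F △ P` of an edge set with the multiset of edges of a walk:
the edges appearing an odd number of times in total. -/
noncomputable def sdWalk {V : Type*} [DecidableEq V] (G : SimpleGraph V)
    (F : Finset (Sym2 V)) {u v : V} (w : G.Walk u v) : Finset (Sym2 V) :=
  (F ∪ w.edges.toFinset).filter (fun e => inSD F w.edges e)

/-- `w` is an `F`-alternating walk: membership of consecutive edges in the running
symmetric difference alternates. -/
def IsAltWalk {V : Type*} [DecidableEq V] (G : SimpleGraph V)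
    (F : Finset (Sym2 V)) {u v : V} (w : G.Walk u v) : Prop :=
  ∀ j : ℕ, j + 1 < w.edges.length →
    (inSD F (w.edges.take j) (w.edges.getD j (Sym2.diag u)) ↔
      ¬ inSD F (w.edges.take (j + 1)) (w.edges.getD (j + 1) (Sym2.diag u)))

/-- Type ↑↑: the first edge is not in `F` and the last edge is not in the running
symmetric difference. -/
def TypeUU {V : Type*} [DecidableEq V] (G : SimpleGraph V)
    (F : Finset (Sym2 V)) {u v : V} (w : G.Walk u v) : Prop :=
  0 < w.edges.length ∧ w.edges.getD 0 (Sym2.diag u) ∉ F ∧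
    ¬ inSD F (w.edges.take (w.edges.length - 1))
      (w.edges.getD (w.edges.length - 1) (Sym2.diag u))

/-- Type ↑↓: either the empty walk, or the first edge is not in `F` and the last edge is
in the running symmetric difference. -/
def TypeUD {V : Type*} [DecidableEq V] (G : SimpleGraph V)
    (F : Finset (Sym2 V)) {u v : V} (w : G.Walk u v) : Prop :=
  w.edges.length = 0 ∨ (w.edges.getD 0 (Sym2.diag u) ∉ F ∧
    inSD F (w.edges.take (w.edges.length - 1))
      (w.edges.getD (w.edges.length - 1) (Sym2.diag u)))

/-- Endpoints of `F`-alternating walks of type ↑↓ from `y`. -/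
noncomputable def Aud {V : Type*} [Fintype V] [DecidableEq V] (G : SimpleGraph V)
    (F : Finset (Sym2 V)) (y : V) : Finset V :=
  Finset.univ.filter (fun z : V => ∃ w : G.Walk y z, IsAltWalk G F w ∧ TypeUD G F w)

/-- Endpoints of `F`-alternating walks of type ↑↑ from `y`. -/
noncomputable def Auu {V : Type*} [Fintype V] [DecidableEq V] (G : SimpleGraph V)
    (F : Finset (Sym2 V)) (y : V) : Finset V :=
  Finset.univ.filter (fun z : V => ∃ w : G.Walk y z, IsAltWalk G F w ∧ TypeUU G F w)


section Aux
open SimpleGraph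

lemma getD_take_eq {α : Type*} (l : List α) (n j : ℕ) (d : α) (h1 : j < n) (h2 : j < l.length) :
    (l.take n).getD j d = l.getD j d := by
  rw [List.getD_eq_getElem _ _ (by simp [h1, h2] : j < (l.take n).length),
    List.getD_eq_getElem _ _ h2, List.getElem_take]

lemma exists_prefix {V : Type*} {G : SimpleGraph V} :
    ∀ {a b : V} (w : G.Walk a b) (n : ℕ), n ≤ w.length →
      ∃ w' : G.Walk a (w.getVert n), w'.edges = w.edges.take n := by
  intro a b w
  induction w with
  | nil =>
    intro n hn
    simp only [SimpleGraph.Walk.length_nil, Nat.le_zero] at hn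
    subst hn
    exact ⟨SimpleGraph.Walk.nil, by simp⟩
  | cons h p ih =>
    intro n hn
    cases n with
    | zero => exact ⟨SimpleGraph.Walk.nil, by rfl⟩
    | succ m =>
      obtain ⟨p', hp'⟩ := ih m (by simpa using hn)
      exact ⟨SimpleGraph.Walk.cons h p', by simp [hp']⟩

lemma edge_getD {V : Type*} {G : SimpleGraph V} :
    ∀ {a b : V} (w : G.Walk a b) (i : ℕ), i < w.length → ∀ d : Sym2 V,
      w.edges.getD i d = s(w.getVert i, w.getVert (i + 1)) := by
  intro a b w
  induction w with
  | nil => intro i hi; simp at hi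
  | cons h p ih =>
    intro i hi d
    cases i with
    | zero => simp
    | succ m =>
      simp only [SimpleGraph.Walk.edges_cons, List.getD_cons_succ,
        SimpleGraph.Walk.getVert_cons_succ]
      exact ih m (by simpa using hi) d

lemma alt_prefix {V : Type*} [DecidableEq V] {G : SimpleGraph V} (F : Finset (Sym2 V))
    {y a b : V} (w : G.Walk y b) (w' : G.Walk y a) (n : ℕ) (h : w'.edges = w.edges.take n)
    (halt : IsAltWalk G F w) : IsAltWalk G F w' := by
  intro j hj
  rw [h] at hj ⊢
  have hlen : (w.edges.take n).length = min n w.edges.length := by simp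
  rw [hlen] at hj
  have hjn : j + 1 < n := lt_of_lt_of_le hj (min_le_left _ _)
  have hjl : j + 1 < w.edges.length := lt_of_lt_of_le hj (min_le_right _ _)
  rw [List.take_take, List.take_take,
    getD_take_eq _ _ _ _ (Nat.lt_of_succ_lt hjn) (Nat.lt_of_succ_lt hjl),
    getD_take_eq _ _ _ _ hjn hjl,
    min_eq_left (le_of_lt (Nat.lt_of_succ_lt hjn)), min_eq_left (le_of_lt hjn)]
  exact halt j hjl

lemma inSD_nil {V : Type*} [DecidableEq V] (F : Finset (Sym2 V)) (e : Sym2 V) :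
    inSD F [] e ↔ e ∈ F := by
  by_cases h : e ∈ F <;> simp [inSD, h]

lemma key_lemma {V : Type*} [Fintype V] [DecidableEq V] (G : SimpleGraph V)
    (F : Finset (Sym2 V)) (y : V) :
    ∀ n : ℕ, ∀ v : V, v ≠ y → v ∉ Auu G F y →
      ∀ w : G.Walk y v, w.length = n → IsAltWalk G F w → TypeUD G F w →
      ∃ u ∈ Auu G F y, s(u, v) ∈ F := by
  intro n
  induction n using Nat.strong_induction_on with
  | _ n ih =>
  intro v hvy hvA w hwn halt hUD
  have hlen : w.edges.length = w.length := w.length_edges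
  have hne : w.edges.length ≠ 0 := by
    intro h0
    exact hvy ((SimpleGraph.Walk.eq_of_length_eq_zero (p := w) (by omega)).symm)
  set ℓ := w.edges.length with hℓ
  rcases hUD with h0 | ⟨hfirst, hlast⟩
  · exact absurd h0 hne
  by_cases hl1 : ℓ = 1
  · exfalso
    apply hfirst
    rw [show ℓ - 1 = 0 by omega, List.take_zero, inSD_nil] at hlast
    exact hlast
  have hl2 : 2 ≤ ℓ := by omega
  set e := w.edges.getD (ℓ - 1) (Sym2.diag y) with hedef
  set u' := w.getVert (ℓ - 1) with hu'
  have he : e = s(u', v) := by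
    rw [hedef, edge_getD w (ℓ - 1) (by omega) (Sym2.diag y), show ℓ - 1 + 1 = ℓ by omega]
    have : w.getVert ℓ = v := by rw [hlen]; exact w.getVert_length
    rw [this]
  by_cases heF : e ∈ F
  · -- last edge in F: the (ℓ-1)-prefix is of type ↑↑
    obtain ⟨w', hw'⟩ := exists_prefix w (ℓ - 1) (by omega)
    have halt' := alt_prefix F w w' _ hw' halt
    have hlen' : w'.edges.length = ℓ - 1 := by
      rw [hw', List.length_take]; omega
    refine ⟨u', ?_, he ▸ heF⟩
    simp only [Auu, Finset.mem_filter, Finset.mem_univ, true_and]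
    refine ⟨w', halt', ?_, ?_, ?_⟩
    · omega
    · rw [hw', getD_take_eq _ _ _ _ (by omega) (by omega)]
      exact hfirst
    · rw [hlen', hw', List.take_take, min_eq_left (by omega : ℓ - 1 - 1 ≤ ℓ - 1),
        getD_take_eq _ _ _ _ (by omega) (by omega)]
      have halt2 := halt (ℓ - 2) (by omega)
      rw [show ℓ - 2 + 1 = ℓ - 1 by omega] at halt2
      intro hcon
      have : ℓ - 2 = ℓ - 1 - 1 := by omega
      rw [← this] at hcon
      exact (halt2.mp hcon) hlast
  · -- last edge not in F: it occurs earlier in the walk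
    have hodd : Odd ((w.edges.take (ℓ - 1)).count e) := by
      have := hlast
      rw [inSD, if_neg heF, Nat.zero_add] at this
      exact this
    have hmem : e ∈ w.edges.take (ℓ - 1) := by
      rw [← List.count_pos_iff]
      rcases hodd with ⟨c, hc⟩
      omega
    obtain ⟨j, hj, hje⟩ := List.mem_iff_getElem.mp hmem
    rw [List.length_take] at hj
    have hjℓ : j < ℓ - 1 := lt_of_lt_of_le hj (min_le_left _ _)
    have hLj : w.edges.getD j (Sym2.diag y) = e := by
      rw [List.getD_eq_getElem _ _ (by omega : j < w.edges.length), ← hje, List.getElem_take]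
    have hjv : v = w.getVert j ∨ v = w.getVert (j + 1) := by
      have h1 : s(w.getVert j, w.getVert (j + 1)) = s(u', v) := by
        rw [← he, ← hLj, edge_getD w j (by omega) (Sym2.diag y)]
      have h2 : v ∈ s(w.getVert j, w.getVert (j + 1)) := by
        rw [h1]; exact Sym2.mem_mk_right _ _
      rwa [Sym2.mem_iff] at h2
    have step : ∀ m : ℕ, 0 < m → m < ℓ → w.getVert m = v → ∃ u ∈ Auu G F y, s(u, v) ∈ F := by
      intro m hm0 hmℓ hmv
      obtain ⟨w₂', hw₂'⟩ := exists_prefix w m (by omega)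
      set w₂ := w₂'.copy rfl hmv with hw₂def
      have hw₂ : w₂.edges = w.edges.take m := by
        rw [hw₂def, SimpleGraph.Walk.edges_copy]; exact hw₂'
      have halt₂ := alt_prefix F w w₂ m hw₂ halt
      have hlen₂ : w₂.edges.length = m := by rw [hw₂, List.length_take]; omega
      have hfirst₂ : w₂.edges.getD 0 (Sym2.diag y) ∉ F := by
        rw [hw₂, getD_take_eq _ _ _ _ hm0 (by omega)]
        exact hfirst
      have htake₂ : w₂.edges.take (m - 1) = w.edges.take (m - 1) := by
        rw [hw₂, List.take_take, min_eq_left (by omega)]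
      have hgetD₂ : w₂.edges.getD (m - 1) (Sym2.diag y) = w.edges.getD (m - 1) (Sym2.diag y) := by
        rw [hw₂, getD_take_eq _ _ _ _ (by omega) (by omega)]
      by_cases hc : inSD F (w.edges.take (m - 1)) (w.edges.getD (m - 1) (Sym2.diag y))
      · refine ih m (by omega) v hvy hvA w₂ ?_ halt₂ ?_
        · rw [← w₂.length_edges, hlen₂]
        · exact Or.inr ⟨hfirst₂, by rw [hlen₂, htake₂, hgetD₂]; exact hc⟩
      · exfalso
        apply hvA
        simp only [Auu, Finset.mem_filter, Finset.mem_univ, true_and]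
        exact ⟨w₂, halt₂, by omega, hfirst₂, by rw [hlen₂, htake₂, hgetD₂]; exact hc⟩
    rcases hjv with hjv | hjv
    · have hj0 : 0 < j := by
        rcases Nat.eq_zero_or_pos j with h | h
        · exfalso; apply hvy; rw [hjv, h]; exact w.getVert_zero
        · exact h
      exact step j hj0 (by omega) hjv.symm
    · exact step (j + 1) (by omega) (by omega) hjv.symm

end Aux

theorem stmt11 {V : Type*} [Fintype V] [DecidableEq V] (G : SimpleGraph V) (k : ℕ)
    (F : Finset (Sym2 V)) (hF : IsKMatching G k F) (hFmax : F.card = maxKMatch G k)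
    (hlam : 0 < lamK G k)
    (y : V) (hy : edgeDeg F y < k) :
    (∀ v ∈ Aud G F y \ insert y (Auu G F y), ∃ u ∈ Auu G F y, s(u, v) ∈ F) ∧
      (Aud G F y \ Auu G F y).card ≤ k * (Auu G F y).card + 1 := by
  constructor
  · intro v hv
    rw [Finset.mem_sdiff, Finset.mem_insert] at hv
    push_neg at hv
    obtain ⟨hvAud, hvy, hvA⟩ := hv
    simp only [Aud, Finset.mem_filter, Finset.mem_univ, true_and] at hvAud
    obtain ⟨w, halt, hUD⟩ := hvAud
    exact key_lemma G F y w.length v hvy hvA w rfl halt hUD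
  · have h1 : ∀ v ∈ Aud G F y \ insert y (Auu G F y), ∃ u ∈ Auu G F y, s(u, v) ∈ F := by
      intro v hv
      rw [Finset.mem_sdiff, Finset.mem_insert] at hv
      push_neg at hv
      obtain ⟨hvAud, hvy, hvA⟩ := hv
      simp only [Aud, Finset.mem_filter, Finset.mem_univ, true_and] at hvAud
      obtain ⟨w, halt, hUD⟩ := hvAud
      exact key_lemma G F y w.length v hvy hvA w rfl halt hUD
    set nb : V → Finset V := fun u => Finset.univ.filter (fun v => s(u, v) ∈ F) with hnb
    have hnbcard : ∀ u : V, (nb u).card ≤ k := by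
      intro u
      have hinj : Set.InjOn (fun v => s(u, v)) (nb u) := by
        intro a _ b _ hab
        exact Sym2.congr_right.mp hab
      have hsub : (nb u).image (fun v => s(u, v)) ⊆ F.filter (fun e => u ∈ e) := by
        intro e he
        simp only [Finset.mem_image, hnb, Finset.mem_filter, Finset.mem_univ, true_and] at he ⊢
        obtain ⟨a, ha, rfl⟩ := he
        exact ⟨ha, Sym2.mem_mk_left _ _⟩
      calc (nb u).card = ((nb u).image (fun v => s(u, v))).card :=
            (Finset.card_image_of_injOn hinj).symm
        _ ≤ (F.filter (fun e => u ∈ e)).card := Finset.card_le_card hsub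
        _ ≤ k := by
          have h := hF.2 u
          unfold edgeDeg at h
          convert h using 2
          ext e
          simp
    have hsubset : Aud G F y \ Auu G F y ⊆ insert y ((Auu G F y).biUnion nb) := by
      intro v hv
      rw [Finset.mem_sdiff] at hv
      by_cases hvy : v = y
      · rw [hvy]; exact Finset.mem_insert_self _ _
      · obtain ⟨u, hu, huv⟩ := h1 v (by
          rw [Finset.mem_sdiff, Finset.mem_insert]
          exact ⟨hv.1, by push_neg; exact ⟨hvy, hv.2⟩⟩)
        apply Finset.mem_insert_of_mem
        rw [Finset.mem_biUnion]
        exact ⟨u, hu, by simp only [hnb, Finset.mem_filter, Finset.mem_univ, true_and]; exact huv⟩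
    calc (Aud G F y \ Auu G F y).card ≤ (insert y ((Auu G F y).biUnion nb)).card :=
          Finset.card_le_card hsubset
      _ ≤ ((Auu G F y).biUnion nb).card + 1 := Finset.card_insert_le _ _
      _ ≤ (∑ u ∈ Auu G F y, (nb u).card) + 1 := by
          exact Nat.add_le_add_right (Finset.card_biUnion_le) 1
      _ ≤ (∑ _u ∈ Auu G F y, k) + 1 := by
          exact Nat.add_le_add_right (Finset.sum_le_sum (fun u _ => hnbcard u)) 1
      _ = k * (Auu G F y).card + 1 := by rw [Finset.sum_const, smul_eq_mul, mul_comm]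
end

section
/- For any graph G with minimum degree δ, let Φ(G) be the set of edges uv of G such that both endpoint degrees satisfy δ+1 ≤ d(u), d(v) ≤ D for a fixed D ≥ δ+1. Then for any e ∈ Φ(G): Φ(G−e) ⊆ Φ(G) and |Φ(G)| ≤ |Φ(G−e)| + 2δ + 1. -/
open Finset
open scoped Classical

attribute [-instance] SimpleGraph.instDecidableRelAdjDeleteEdgesOfDecidablePredSym2MemSetOfDecidableEq

/-- `Φ(G)`: the set of edges of `G` both of whose endpoint degrees lie in `{δ+1, …, D}`. -/
noncomputable def Phi {V : Type*} [Fintype V] (G : SimpleGraph V) (δ D : ℕ) :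
    Finset (Sym2 V) :=
  G.edgeFinset.filter (fun e => ∀ v ∈ e, δ + 1 ≤ G.degree v ∧ G.degree v ≤ D)

lemma deg_del_eq {V : Type*} [Fintype V] [DecidableEq V] (G : SimpleGraph V)
    (e : Sym2 V) (v : V) (hv : v ∉ e) :
    (G.deleteEdges {e}).degree v = G.degree v := by
  unfold SimpleGraph.degree
  congr 1
  ext w
  simp only [SimpleGraph.mem_neighborFinset, SimpleGraph.deleteEdges_adj,
    Set.mem_singleton_iff]
  constructor
  · rintro ⟨h, _⟩; exact h
  · intro h
    exact ⟨h, fun hc => hv (hc ▸ Sym2.mem_mk_left v w)⟩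

lemma deg_del_le {V : Type*} [Fintype V] [DecidableEq V] (G : SimpleGraph V)
    (e : Sym2 V) (v : V) :
    (G.deleteEdges {e}).degree v ≤ G.degree v := by
  apply Finset.card_le_card
  intro w hw
  simp only [SimpleGraph.mem_neighborFinset, SimpleGraph.deleteEdges_adj] at hw ⊢
  exact hw.1

lemma deg_del_ge {V : Type*} [Fintype V] [DecidableEq V] (G : SimpleGraph V)
    (x y : V) :
    G.degree x ≤ (G.deleteEdges {s(x,y)}).degree x + 1 := by
  have h : G.neighborFinset x ⊆ insert y ((G.deleteEdges {s(x,y)}).neighborFinset x) := by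
    intro w hw
    simp only [SimpleGraph.mem_neighborFinset] at hw
    by_cases hwy : w = y
    · simp [hwy]
    · simp [SimpleGraph.mem_neighborFinset, SimpleGraph.deleteEdges_adj, hw, hwy,
        Sym2.congr_right]
      exact fun _ hwx => (G.loopless.irrefl x (hwx ▸ hw))
  calc G.degree x = (G.neighborFinset x).card := rfl
    _ ≤ (insert y ((G.deleteEdges {s(x,y)}).neighborFinset x)).card := Finset.card_le_card h
    _ ≤ _ := Finset.card_insert_le _ _

theorem stmt13 {V : Type*} [Fintype V] [DecidableEq V] [Nonempty V]
    (G : SimpleGraph V) (δ D : ℕ)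
    (hδ : G.minDegree = δ) (hD : δ + 1 ≤ D)
    (e : Sym2 V) (he : e ∈ Phi G δ D) :
    Phi (G.deleteEdges {e}) δ D ⊆ Phi G δ D ∧
      (Phi G δ D).card ≤ (Phi (G.deleteEdges {e}) δ D).card + 2 * δ + 1 := by
  induction e using Sym2.ind with
  | _ x y =>
  set G' := G.deleteEdges {s(x,y)} with hG'
  have he' := he
  simp only [Phi, mem_filter, SimpleGraph.mem_edgeFinset, SimpleGraph.mem_edgeSet] at he'
  obtain ⟨hxy, hdegs⟩ := he'
  have hdx := hdegs x (Sym2.mem_mk_left x y)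
  have hdy := hdegs y (Sym2.mem_mk_right x y)
  -- edges of G' are edges of G minus e
  have hedge' : ∀ f, f ∈ G'.edgeSet ↔ f ∈ G.edgeSet ∧ f ≠ s(x,y) := by
    intro f
    rw [hG', SimpleGraph.edgeSet_deleteEdges]
    simp
  -- Part 1
  have hsub : Phi G' δ D ⊆ Phi G δ D := by
    intro f hf
    simp only [Phi, mem_filter, SimpleGraph.mem_edgeFinset] at hf ⊢
    obtain ⟨hfe, hfd⟩ := hf
    rw [hedge'] at hfe
    refine ⟨hfe.1, fun v hv => ?_⟩
    obtain ⟨h1, h2⟩ := hfd v hv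
    by_cases hve : v ∈ s(x,y)
    · -- v endpoint of e: degree bounds from he
      rcases Sym2.mem_iff.mp hve with rfl | rfl
      · exact ⟨le_trans h1 (deg_del_le G _ v), hdx.2⟩
      · exact ⟨le_trans h1 (deg_del_le G _ v), hdy.2⟩
    · rw [deg_del_eq G _ v hve] at h1 h2
      exact ⟨h1, h2⟩
  refine ⟨hsub, ?_⟩
  -- Part 2
  have hkey : ∀ f ∈ Phi G δ D \ Phi G' δ D,
      f = s(x,y) ∨ (G.degree x = δ + 1 ∧ f ∈ G.incidenceFinset x) ∨
        (G.degree y = δ + 1 ∧ f ∈ G.incidenceFinset y) := by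
    intro f hf
    rw [mem_sdiff] at hf
    obtain ⟨hf1, hf2⟩ := hf
    by_cases hfe : f = s(x,y)
    · exact Or.inl hfe
    simp only [Phi, mem_filter, SimpleGraph.mem_edgeFinset] at hf1 hf2
    obtain ⟨hfE, hfd⟩ := hf1
    have hfE' : f ∈ G'.edgeSet := (hedge' f).mpr ⟨hfE, hfe⟩
    push_neg at hf2
    obtain ⟨v, hvf, hvd⟩ := hf2 hfE'
    obtain ⟨h1, h2⟩ := hfd v hvf
    have hupper : G'.degree v ≤ D := le_trans (deg_del_le G _ v) h2
    have hlow : G'.degree v < δ + 1 := by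
      by_contra hc
      exact absurd hupper (not_le.mpr (hvd (le_of_not_gt hc)))
    have hve : v ∈ s(x,y) := by
      by_contra hc
      rw [deg_del_eq G _ v hc] at hlow
      omega
    rcases Sym2.mem_iff.mp hve with rfl | rfl
    · refine Or.inr (Or.inl ⟨?_, ?_⟩)
      · have h3 := deg_del_ge G v y
        rw [← hG'] at h3
        omega
      · rw [SimpleGraph.mem_incidenceFinset]
        exact ⟨hfE, hvf⟩
    · refine Or.inr (Or.inr ⟨?_, ?_⟩)
      · have h3 : G.degree v ≤ G'.degree v + 1 := by
          have := deg_del_ge G v x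
          rw [Sym2.eq_swap, ← hG'] at this
          exact this
        omega
      · rw [SimpleGraph.mem_incidenceFinset]
        exact ⟨hfE, hvf⟩
  -- counting
  have hcount : (Phi G δ D).card ≤ (Phi G' δ D).card + (Phi G δ D \ Phi G' δ D).card := by
    have : Phi G δ D ⊆ Phi G' δ D ∪ (Phi G δ D \ Phi G' δ D) := by
      intro f hf
      by_cases h : f ∈ Phi G' δ D
      · exact mem_union_left _ h
      · exact mem_union_right _ (mem_sdiff.mpr ⟨hf, h⟩)
    exact le_trans (card_le_card this) (card_union_le _ _)
  have hmemx : s(x,y) ∈ G.incidenceFinset x := by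
    rw [SimpleGraph.mem_incidenceFinset]
    exact ⟨hxy, Sym2.mem_mk_left x y⟩
  have hmemy : s(x,y) ∈ G.incidenceFinset y := by
    rw [SimpleGraph.mem_incidenceFinset]
    exact ⟨hxy, Sym2.mem_mk_right x y⟩
  have hL : (Phi G δ D \ Phi G' δ D).card ≤ 2 * δ + 1 := by
    by_cases hx : G.degree x = δ + 1 <;> by_cases hy : G.degree y = δ + 1
    · -- both: L ⊆ I(x) ∪ I(y)
      have hsub2 : Phi G δ D \ Phi G' δ D ⊆ G.incidenceFinset x ∪ G.incidenceFinset y := by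
        intro f hf
        rcases hkey f hf with rfl | ⟨_, h⟩ | ⟨_, h⟩
        · exact mem_union_left _ hmemx
        · exact mem_union_left _ h
        · exact mem_union_right _ h
      have h1 : (G.incidenceFinset x ∪ G.incidenceFinset y).card
          + (G.incidenceFinset x ∩ G.incidenceFinset y).card
          = (G.incidenceFinset x).card + (G.incidenceFinset y).card :=
        card_union_add_card_inter _ _
      have h2 : 1 ≤ (G.incidenceFinset x ∩ G.incidenceFinset y).card :=
        card_pos.mpr ⟨s(x,y), mem_inter.mpr ⟨hmemx, hmemy⟩⟩
      have h3 := card_le_card hsub2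
      rw [SimpleGraph.card_incidenceFinset_eq_degree, SimpleGraph.card_incidenceFinset_eq_degree,
        hx, hy] at h1
      omega
    · have hsub2 : Phi G δ D \ Phi G' δ D ⊆ G.incidenceFinset x := by
        intro f hf
        rcases hkey f hf with rfl | ⟨_, h⟩ | ⟨h, _⟩
        · exact hmemx
        · exact h
        · exact absurd h hy
      have h3 := card_le_card hsub2
      rw [SimpleGraph.card_incidenceFinset_eq_degree, hx] at h3
      omega
    · have hsub2 : Phi G δ D \ Phi G' δ D ⊆ G.incidenceFinset y := by
        intro f hf
        rcases hkey f hf with rfl | ⟨h, _⟩ | ⟨_, h⟩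
        · exact hmemy
        · exact absurd h hx
        · exact h
      have h3 := card_le_card hsub2
      rw [SimpleGraph.card_incidenceFinset_eq_degree, hy] at h3
      omega
    · have hsub2 : Phi G δ D \ Phi G' δ D ⊆ {s(x,y)} := by
        intro f hf
        rcases hkey f hf with rfl | ⟨h, _⟩ | ⟨h, _⟩
        · exact mem_singleton_self _
        · exact absurd h hx
        · exact absurd h hy
      have h3 := card_le_card hsub2
      simp at h3
      omega
  omega
end
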